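/- arXiv:1402.6294 — 5 statements merged into one kernel-verified Lean document; each statement's English description precedes it below -/
import Mathlib

section
/- For fixed α ∈ (0, (q-1)/q], the function f_q(α) = α·log_q((q-1)/α) + (1-α)·log_q(1/(1-α)) is nonincreasing as a function of the real variable q ≥ 2, and satisfies f_q(α) ≥ qα/(q-1) for α ∈ [0,(q-1)/q]. -/
open Real

lemma chord_binEntropy {α β : ℝ} (hβ0 : 0 < β) (hβ1 : β < 1) (hα0 : 0 ≤ α)
    (hαβ : α ≤ β) : binEntropy β * α ≤ binEntropy α * β := by
  have hcon := Real.strictConcave_binEntropy.concaveOn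
  have htβ : α / β ≤ 1 := (div_le_one hβ0).2 hαβ
  have ha' : (0:ℝ) ≤ 1 - α / β := by linarith
  have hb' : (0:ℝ) ≤ α / β := by positivity
  have hab' : (1 - α / β) + α / β = 1 := by ring
  have h := hcon.2 (Set.mem_Icc.2 ⟨le_refl 0, zero_le_one⟩)
      (Set.mem_Icc.2 ⟨hβ0.le, hβ1.le⟩) ha' hb' hab'
  simp only [smul_eq_mul, mul_zero, zero_add, Real.binEntropy_zero, add_zero,
    div_mul_cancel₀ _ (ne_of_gt hβ0)] at h
  calc binEntropy β * α = α / β * binEntropy β * β := by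
        field_simp
    _ ≤ binEntropy α * β := mul_le_mul_of_nonneg_right h hβ0.le

lemma binEntropy_val {q : ℝ} (hq : 2 ≤ q) :
    binEntropy ((q - 1) / q) = (q * Real.log q - (q - 1) * Real.log (q - 1)) / q := by
  have hq0 : (0:ℝ) < q := by linarith
  have hq1 : (0:ℝ) < q - 1 := by linarith
  rw [Real.binEntropy]
  have h1 : 1 - (q - 1) / q = 1 / q := by field_simp; ring
  rw [h1, one_div, inv_inv, inv_div, Real.log_div hq0.ne' hq1.ne']
  field_simp
  ring

lemma log_ineq {q₁ q₂ : ℝ} (hq₁ : 2 ≤ q₁) (h12 : q₁ ≤ q₂) :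
    (q₁ - 1) * (Real.log (q₂ - 1) - Real.log (q₁ - 1)) ≤ q₁ * (Real.log q₂ - Real.log q₁) := by
  have hq10 : (0:ℝ) < q₁ := by linarith
  have h1 : (0:ℝ) < q₁ - 1 := by linarith
  have h2 : (0:ℝ) < q₂ - 1 := by linarith
  have hx : (q₂ - 1) / (q₁ - 1) ∈ Set.Ioi (0:ℝ) := by
    simp only [Set.mem_Ioi]; positivity
  have hy : (1:ℝ) ∈ Set.Ioi (0:ℝ) := by norm_num
  have ha' : (0:ℝ) ≤ (q₁ - 1) / q₁ := by positivity
  have hb' : (0:ℝ) ≤ 1 / q₁ := by positivity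
  have hab' : (q₁ - 1) / q₁ + 1 / q₁ = 1 := by field_simp; ring
  have h := strictConcaveOn_log_Ioi.concaveOn.2 hx hy ha' hb' hab'
  simp only [smul_eq_mul, Real.log_one, mul_one, mul_zero, add_zero] at h
  have hcomb : (q₁ - 1) / q₁ * ((q₂ - 1) / (q₁ - 1)) + 1 / q₁ = q₂ / q₁ := by
    field_simp; ring
  rw [hcomb, Real.log_div (by linarith : (0:ℝ) < q₂).ne' hq10.ne',
    Real.log_div h2.ne' h1.ne'] at h
  calc (q₁ - 1) * (Real.log (q₂ - 1) - Real.log (q₁ - 1))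
      = q₁ * ((q₁ - 1) / q₁ * (Real.log (q₂ - 1) - Real.log (q₁ - 1))) := by
        field_simp
    _ ≤ q₁ * (Real.log q₂ - Real.log q₁) := mul_le_mul_of_nonneg_left h hq10.le

lemma F_eq {q α : ℝ} (hq : 2 ≤ q) (hα0 : 0 < α) (hα1 : α < 1) :
    α * Real.logb q ((q - 1) / α) + (1 - α) * Real.logb q (1 / (1 - α))
      = (α * Real.log (q - 1) + binEntropy α) / Real.log q := by
  have hq1 : (0:ℝ) < q - 1 := by linarith
  have h1α : (0:ℝ) < 1 - α := by linarith
  rw [Real.binEntropy, Real.logb, Real.logb, Real.log_div hq1.ne' hα0.ne',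
    one_div]
  simp only [Real.log_inv]
  field_simp
  ring

theorem entropy_function_properties :
    (∀ q₁ q₂ α : ℝ, 2 ≤ q₁ → q₁ ≤ q₂ → 0 < α → α ≤ (q₁ - 1) / q₁ →
      α * Real.logb q₂ ((q₂ - 1) / α) + (1 - α) * Real.logb q₂ (1 / (1 - α))
        ≤ α * Real.logb q₁ ((q₁ - 1) / α) + (1 - α) * Real.logb q₁ (1 / (1 - α))) ∧
    (∀ q α : ℝ, 2 ≤ q → 0 ≤ α → α ≤ (q - 1) / q →
      α * Real.logb q ((q - 1) / α) + (1 - α) * Real.logb q (1 / (1 - α))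
        ≥ q * α / (q - 1)) := by
  constructor
  · intro q₁ q₂ α hq₁ h12 hα0 hα1
    have hq₂ : 2 ≤ q₂ := le_trans hq₁ h12
    have hq10 : (0:ℝ) < q₁ := by linarith
    have hq11 : (0:ℝ) < q₁ - 1 := by linarith
    have hβ1 : (q₁ - 1) / q₁ < 1 := by rw [div_lt_one hq10]; linarith
    have hα1' : α < 1 := lt_of_le_of_lt hα1 hβ1
    rw [F_eq hq₁ hα0 hα1', F_eq hq₂ hα0 hα1']
    have ha : 0 < Real.log q₁ := Real.log_pos (by linarith)
    have hb : 0 < Real.log q₂ := Real.log_pos (by linarith)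
    rw [div_le_div_iff₀ hb ha]
    have hab : Real.log q₁ ≤ Real.log q₂ := Real.log_le_log hq10 h12
    have hchord := chord_binEntropy (β := (q₁ - 1) / q₁) (by positivity) hβ1 hα0.le hα1
    rw [binEntropy_val hq₁] at hchord
    have hC : (q₁ * Real.log q₁ - (q₁ - 1) * Real.log (q₁ - 1)) * α
        ≤ binEntropy α * (q₁ - 1) := by
      have h := mul_le_mul_of_nonneg_left hchord hq10.le
      calc (q₁ * Real.log q₁ - (q₁ - 1) * Real.log (q₁ - 1)) * α
          = q₁ * ((q₁ * Real.log q₁ - (q₁ - 1) * Real.log (q₁ - 1)) / q₁ * α) := by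
            field_simp
        _ ≤ q₁ * (binEntropy α * ((q₁ - 1) / q₁)) := h
        _ = binEntropy α * (q₁ - 1) := by field_simp
    have hL := log_ineq hq₁ h12
    have key : (α * Real.log (q₂ - 1) + binEntropy α) * Real.log q₁ * (q₁ - 1)
        ≤ (α * Real.log (q₁ - 1) + binEntropy α) * Real.log q₂ * (q₁ - 1) := by
      nlinarith [mul_le_mul_of_nonneg_right hC (sub_nonneg.2 hab),
        mul_le_mul_of_nonneg_left hL (mul_nonneg hα0.le ha.le)]
    exact le_of_mul_le_mul_right key hq11
  · intro q α hq hα0 hα1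
    rcases hα0.eq_or_lt with rfl | hα0'
    · simp
    have hq0 : (0:ℝ) < q := by linarith
    have hq1 : (0:ℝ) < q - 1 := by linarith
    have hβ1 : (q - 1) / q < 1 := by rw [div_lt_one hq0]; linarith
    have hα1' : α < 1 := lt_of_le_of_lt hα1 hβ1
    rw [ge_iff_le, F_eq hq hα0' hα1']
    have ha : 0 < Real.log q := Real.log_pos (by linarith)
    rw [div_le_div_iff₀ hq1 ha]
    have hchord := chord_binEntropy (β := (q - 1) / q) (by positivity) hβ1 hα0 hα1
    rw [binEntropy_val hq] at hchord
    have hC : (q * Real.log q - (q - 1) * Real.log (q - 1)) * α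
        ≤ binEntropy α * (q - 1) := by
      have h := mul_le_mul_of_nonneg_left hchord hq0.le
      calc (q * Real.log q - (q - 1) * Real.log (q - 1)) * α
          = q * ((q * Real.log q - (q - 1) * Real.log (q - 1)) / q * α) := by
            field_simp
        _ ≤ q * (binEntropy α * ((q - 1) / q)) := h
        _ = binEntropy α * (q - 1) := by field_simp
    nlinarith [Real.log_nonneg (by linarith : (1:ℝ) ≤ q - 1)]
end

section
/- Let ε ∈ (0,1), q ≥ 3, and let p be a prime with εn < p < 3n/5. Then any code C ⊆ [q]^n such that no two distinct words of C are at Hamming distance exactly p satisfies |C| ≤ q^{(1 - ε/125)n}. -/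
open Finset

namespace FranklFPD
variable {q m p : ℕ} [NeZero q]

def wt (a : Fin m → Fin q) : ℕ := (univ.filter fun i => a i ≠ 0).card

def mon (p : ℕ) (a : Fin m → Fin q) : (Fin m → Fin q) → ZMod p :=
  fun x => ∏ i, if a i ≠ 0 ∧ x i ≠ a i then 0 else 1

def ind (p : ℕ) (i : Fin m) (v : Fin q) : (Fin m → Fin q) → ZMod p :=
  fun x => if x i = v then 1 else 0

lemma ind_mul_mon_update {i : Fin m} {v : Fin q} (hv : v ≠ 0) {a : Fin m → Fin q}
    (ha : a i = 0) (x : Fin m → Fin q) :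
    ind p i v x * mon p a x = mon p (Function.update a i v) x := by
  unfold ind mon
  rw [← Finset.mul_prod_erase univ _ (mem_univ i),
    ← Finset.mul_prod_erase univ
      (fun i' => if Function.update a i v i' ≠ 0 ∧ x i' ≠ Function.update a i v i' then 0 else 1)
      (mem_univ i), ← mul_assoc]
  congr 1
  · rw [Function.update_self]
    by_cases h : x i = v <;> simp [h, ha, hv]
  · exact prod_congr rfl fun i' hi' => by rw [Function.update_of_ne (mem_erase.mp hi').1]

lemma ind_mul_mon_self {i : Fin m} {v : Fin q} (hv : v ≠ 0) {a : Fin m → Fin q}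
    (ha : a i = v) (x : Fin m → Fin q) :
    ind p i v x * mon p a x = mon p a x := by
  by_cases h : x i = v
  · simp [ind, h]
  · have h0 : mon p a x = 0 :=
      Finset.prod_eq_zero (mem_univ i) (by simp [ha, h, hv])
    simp [ind, h, h0]

lemma ind_mul_mon_zero {i : Fin m} {v : Fin q} (hv : v ≠ 0) {a : Fin m → Fin q}
    (ha0 : a i ≠ 0) (hav : a i ≠ v) (x : Fin m → Fin q) :
    ind p i v x * mon p a x = 0 := by
  by_cases h : x i = v
  · have h0 : mon p a x = 0 :=
      Finset.prod_eq_zero (mem_univ i)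
        (by
          have hxa : x i ≠ a i := by rw [h]; exact fun hh => hav hh.symm
          simp [ha0, hxa])
    simp [h0]
  · simp [ind, h]

lemma wt_update {i : Fin m} {v : Fin q} (hv : v ≠ 0) {a : Fin m → Fin q} (ha : a i = 0) :
    wt (Function.update a i v) = wt a + 1 := by
  unfold wt
  have hset : (univ.filter fun i' => Function.update a i v i' ≠ 0)
      = insert i (univ.filter fun i' => a i' ≠ 0) := by
    ext i'
    simp only [mem_filter, mem_univ, true_and, mem_insert]
    by_cases h : i' = i
    · subst h; simp [Function.update_self, hv]
    · simp [h, Function.update_of_ne h]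
  rw [hset, card_insert_of_notMem (by simp [ha])]

omit [NeZero q] in
lemma sum_ind (i : Fin m) (x : Fin m → Fin q) :
    ∑ v : Fin q, ind p i v x = 1 := by
  unfold ind
  simp

lemma ind_zero_eq (i : Fin m) (x : Fin m → Fin q) :
    ind p i (0 : Fin q) x = 1 - ∑ v ∈ univ.erase 0, ind p i v x := by
  have h := sum_ind (p := p) i x
  rw [← Finset.add_sum_erase univ _ (mem_univ (0 : Fin q))] at h
  exact eq_sub_of_add_eq h

def Vsp (p : ℕ) (j : ℕ) : Submodule (ZMod p) ((Fin m → Fin q) → ZMod p) :=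
  Submodule.span (ZMod p) (mon p '' {a | wt a ≤ j})

lemma Vsp_mono {j j' : ℕ} (h : j ≤ j') : (Vsp p j : Submodule (ZMod p) ((Fin m → Fin q) → ZMod p)) ≤ Vsp p j' :=
  Submodule.span_mono (Set.image_mono fun a ha => le_trans ha h)

lemma mon_mem_Vsp {a : Fin m → Fin q} {j : ℕ} (ha : wt a ≤ j) :
    mon p a ∈ (Vsp p j : Submodule (ZMod p) ((Fin m → Fin q) → ZMod p)) :=
  Submodule.subset_span ⟨a, ha, rfl⟩

lemma ind_mul_mem_ne {i : Fin m} {v : Fin q} (hv : v ≠ 0) {a : Fin m → Fin q} {j : ℕ}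
    (ha : wt a ≤ j) :
    (fun x => ind p i v x * mon p a x) ∈ Vsp p (j + 1) := by
  by_cases h0 : a i = 0
  · have : (fun x => ind p i v x * mon p a x) = mon p (Function.update a i v) :=
      funext fun x => ind_mul_mon_update hv h0 x
    rw [this]
    exact mon_mem_Vsp (by rw [wt_update hv h0]; omega)
  · by_cases hve : a i = v
    · have : (fun x => ind p i v x * mon p a x) = mon p a :=
        funext fun x => ind_mul_mon_self hv hve x
      rw [this]
      exact mon_mem_Vsp (le_trans ha (Nat.le_succ j))
    · have : (fun x => ind p i v x * mon p a x) = 0 :=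
        funext fun x => ind_mul_mon_zero hv h0 hve x
      rw [this]
      exact Submodule.zero_mem _

lemma ind_mul_mem (i : Fin m) (v : Fin q) {a : Fin m → Fin q} {j : ℕ}
    (ha : wt a ≤ j) :
    (fun x => ind p i v x * mon p a x) ∈ Vsp p (j + 1) := by
  by_cases hv : v = 0
  · subst hv
    have : (fun x => ind p i (0:Fin q) x * mon p a x)
        = (fun x => mon p a x) - ∑ v ∈ univ.erase (0:Fin q), fun x => ind p i v x * mon p a x := by
      funext x
      simp only [Pi.sub_apply, Finset.sum_apply, ind_zero_eq i x, sub_mul, one_mul,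
        Finset.sum_mul]
    rw [this]
    exact Submodule.sub_mem _ (mon_mem_Vsp (le_trans ha (Nat.le_succ j)))
      (Submodule.sum_mem _ fun v hv => ind_mul_mem_ne (mem_erase.mp hv).1 ha)
  · exact ind_mul_mem_ne hv ha

omit [NeZero q] in
lemma dist_cast (c x : Fin m → Fin q) :
    ((hammingDist c x : ℕ) : ZMod p) = (m : ZMod p) - ∑ i, ind p i (c i) x := by
  have h1 : hammingDist c x = ∑ i, if c i ≠ x i then 1 else 0 := by
    rw [hammingDist, Finset.card_filter]
  rw [h1]
  push_cast
  have h2 : ∀ i : Fin m, (if c i ≠ x i then (1:ZMod p) else 0) = 1 - ind p i (c i) x := by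
    intro i
    by_cases h : c i = x i <;> simp [ind, h, eq_comm]
  simp only [h2]
  rw [Finset.sum_sub_distrib]
  simp

def mulLin (d : (Fin m → Fin q) → ZMod p) :
    ((Fin m → Fin q) → ZMod p) →ₗ[ZMod p] ((Fin m → Fin q) → ZMod p) where
  toFun g := fun x => d x * g x
  map_add' g h := by funext x; simp [mul_add]
  map_smul' c g := by funext x; simp [smul_eq_mul]; ring

lemma step_mem {j : ℕ} (c : Fin m → Fin q) (e : ZMod p)
    {g : (Fin m → Fin q) → ZMod p} (hg : g ∈ (Vsp p j : Submodule (ZMod p) _)) :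
    (fun x => ((hammingDist c x : ZMod p) - e) * g x) ∈ (Vsp p (j+1) : Submodule (ZMod p) _) := by
  have hmap : Submodule.map (mulLin (fun x => ((hammingDist c x : ZMod p) - e))) (Vsp p j)
      ≤ Vsp p (j+1) := by
    rw [Vsp, Submodule.map_span, Submodule.span_le]
    rintro _ ⟨_, ⟨a, ha, rfl⟩, rfl⟩
    have heq : mulLin (fun x => ((hammingDist c x : ZMod p) - e)) (mon p a)
        = ((m : ZMod p) - e) • mon p a - ∑ i, fun x => ind p i (c i) x * mon p a x := by
      funext x
      simp only [mulLin, LinearMap.coe_mk, AddHom.coe_mk, Pi.sub_apply, Pi.smul_apply,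
        Finset.sum_apply, smul_eq_mul, dist_cast c x]
      rw [sub_mul, sub_mul, Finset.sum_mul, sub_mul]
      ring
    show mulLin _ (mon p a) ∈ _
    rw [heq]
    exact Submodule.sub_mem _
      (Submodule.smul_mem _ _ (mon_mem_Vsp (le_trans ha (Nat.le_succ j))))
      (Submodule.sum_mem _ fun i _ => ind_mul_mem i (c i) ha)
  exact hmap ⟨g, hg, rfl⟩

lemma prod_mem_V (c : Fin m → Fin q) (t : ℕ) :
    (fun x => ∏ j ∈ range t, ((hammingDist c x : ZMod p) - ((j+1 : ℕ) : ZMod p)))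
      ∈ (Vsp p t : Submodule (ZMod p) ((Fin m → Fin q) → ZMod p)) := by
  induction t with
  | zero =>
      have : (fun _ : Fin m → Fin q => (1 : ZMod p)) = mon p (fun _ => (0 : Fin q)) := by
        funext x; unfold mon; simp
      simp only [range_zero, prod_empty]
      rw [this]
      exact mon_mem_Vsp (by simp [wt])
  | succ t ih =>
      have heq : (fun x => ∏ j ∈ range (t+1), ((hammingDist c x : ZMod p) - ((j+1 : ℕ) : ZMod p)))
          = fun x => ((hammingDist c x : ZMod p) - ((t+1 : ℕ) : ZMod p))
              * ∏ j ∈ range t, ((hammingDist c x : ZMod p) - ((j+1 : ℕ) : ZMod p)) := by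
        funext x
        rw [prod_range_succ, mul_comm]
      rw [heq]
      exact step_mem c _ ih

lemma frankl_core (hp : p.Prime) {k : ℕ} (hk : k + 1 = p)
    (D : Finset (Fin m → Fin q))
    (hD : ∀ x ∈ D, ∀ y ∈ D, x ≠ y → ¬ (p ∣ hammingDist x y)) :
    D.card ≤ (univ.filter fun a : Fin m → Fin q => wt a ≤ k).card := by
  classical
  haveI : Fact p.Prime := ⟨hp⟩
  set f : (Fin m → Fin q) → ((Fin m → Fin q) → ZMod p) :=
    fun c x => ∏ j ∈ range k, ((hammingDist c x : ZMod p) - ((j+1 : ℕ) : ZMod p)) with hf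
  have hfcc : ∀ c : Fin m → Fin q, f c c ≠ 0 := by
    intro c
    rw [hf]
    simp only [hammingDist_self, Nat.cast_zero, zero_sub]
    rw [Finset.prod_ne_zero_iff]
    intro j hj
    rw [mem_range] at hj
    rw [neg_ne_zero, Ne, ZMod.natCast_eq_zero_iff]
    intro hdvd
    have := Nat.le_of_dvd (by omega) hdvd
    omega
  have hfczero : ∀ c ∈ D, ∀ x ∈ D, x ≠ c → f c x = 0 := by
    intro c hc x hx hne
    have hd0 : hammingDist c x ≠ 0 := by
      rw [Ne, hammingDist_eq_zero]
      exact fun h => hne h.symm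
    have hndvd : ¬ (p ∣ hammingDist c x) := hD c hc x hx (fun h => hne h.symm)
    set d := hammingDist c x with hdd
    have hmodne : d % p ≠ 0 := fun h => hndvd (Nat.dvd_of_mod_eq_zero h)
    have hmodlt : d % p < p := Nat.mod_lt _ (by omega)
    set j0 := d % p - 1 with hj0
    have hj0k : j0 < k := by omega
    have hcast : ((d : ℕ) : ZMod p) = ((j0 + 1 : ℕ) : ZMod p) := by
      have h1 : j0 + 1 = d % p := by omega
      rw [h1]
      conv_lhs => rw [← Nat.div_add_mod d p]
      push_cast
      rw [ZMod.natCast_self]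
      ring
    rw [hf]
    exact Finset.prod_eq_zero (mem_range.mpr hj0k) (by rw [← hdd, hcast, sub_self])
  set S : Finset ((Fin m → Fin q) → ZMod p) :=
    (univ.filter fun a : Fin m → Fin q => wt a ≤ k).image (mon p) with hS
  have hspan : ∀ c : Fin m → Fin q,
      f c ∈ Submodule.span (ZMod p) (S : Set ((Fin m → Fin q) → ZMod p)) := by
    intro c
    have h1 := prod_mem_V (p := p) c k
    have h2 : (S : Set ((Fin m → Fin q) → ZMod p)) = mon p '' {a | wt a ≤ k} := by
      rw [hS, coe_image]
      congr 1
      ext a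
      simp
    rw [h2]
    exact h1
  have hLI : LinearIndependent (ZMod p) (fun c : {x // x ∈ D} => f c.1) := by
    rw [Fintype.linearIndependent_iff]
    intro g hg c0
    have hceval := congrFun hg c0.1
    simp only [Finset.sum_apply, Pi.smul_apply, smul_eq_mul, Pi.zero_apply] at hceval
    rw [Finset.sum_eq_single c0] at hceval
    · rcases mul_eq_zero.mp hceval with h | h
      · exact h
      · exact absurd h (hfcc c0.1)
    · intro c _ hne
      have hval : f c.1 c0.1 = 0 :=
        hfczero c.1 c.2 c0.1 c0.2 (fun h => hne (Subtype.ext h).symm)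
      rw [hval, mul_zero]
    · intro h
      exact absurd (mem_univ c0) h
  set V := Submodule.span (ZMod p) (S : Set ((Fin m → Fin q) → ZMod p)) with hV
  haveI : FiniteDimensional (ZMod p) V := FiniteDimensional.span_of_finite _ S.finite_toSet
  have hLI2 : LinearIndependent (ZMod p)
      (fun c : {x // x ∈ D} => (⟨f c.1, hspan c.1⟩ : V)) := by
    apply LinearIndependent.of_comp V.subtype
    exact hLI
  have h1 : Fintype.card {x // x ∈ D} ≤ Module.finrank (ZMod p) V :=
    hLI2.fintype_card_le_finrank
  have h2 : Module.finrank (ZMod p) V ≤ S.card := by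
    have := finrank_span_finset_le_card (R := ZMod p) S
    simpa [Set.finrank, hV] using this
  have h3 : S.card ≤ (univ.filter fun a : Fin m → Fin q => wt a ≤ k).card :=
    card_image_le
  calc D.card = Fintype.card {x // x ∈ D} := (Fintype.card_coe D).symm
    _ ≤ Module.finrank (ZMod p) V := h1
    _ ≤ S.card := h2
    _ ≤ _ := h3

lemma key_ineq {q : ℕ} (hq : 3 ≤ q) : 5^125 * (q-1)^75 ≤ 3^75 * 2^50 * q^124 := by
  rcases lt_or_ge q 6 with h | h
  · interval_cases q <;> norm_num
  · calc 5^125 * (q-1)^75 ≤ (3^75 * 2^50 * 6^49) * q^75 :=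
          Nat.mul_le_mul (by norm_num) (Nat.pow_le_pow_left (by omega) 75)
    _ = 3^75 * 2^50 * (6^49 * q^75) := by ring
    _ ≤ 3^75 * 2^50 * (q^49 * q^75) :=
          Nat.mul_le_mul_left _ (Nat.mul_le_mul_right _ (Nat.pow_le_pow_left h 49))
    _ = 3^75 * 2^50 * q^124 := by rw [← pow_add]

lemma count_bound (hq : 3 ≤ q) {k : ℕ} (hkm : k ≤ m) :
    (univ.filter fun a : Fin m → Fin q => wt a ≤ k).card * (3^k * (2*(q-1))^(m-k))
      ≤ (5*(q-1))^m := by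
  classical
  set w : Fin q → ℕ := fun v => if v = 0 then 2*(q-1) else 3 with hw
  clear_value w
  have hsumw : ∑ v : Fin q, w v = 5*(q-1) := by
    rw [← Finset.add_sum_erase univ w (mem_univ (0 : Fin q))]
    have h1 : ∀ v ∈ univ.erase (0 : Fin q), w v = 3 := by
      intro v hv
      simp [hw, (mem_erase.mp hv).1]
    rw [Finset.sum_congr rfl h1, Finset.sum_const, card_erase_of_mem (mem_univ _),
      card_univ, Fintype.card_fin]
    simp [hw]
    omega
  have hper : ∀ a : Fin m → Fin q, wt a ≤ k → 3^k * (2*(q-1))^(m-k) ≤ ∏ i, w (a i) := by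
    intro a ha
    have hwm : wt a ≤ m := by
      unfold wt; exact le_trans (card_filter_le _ _) (by simp)
    have hval : ∏ i, w (a i) = 3^(wt a) * (2*(q-1))^(m - wt a) := by
      rw [← Finset.prod_filter_mul_prod_filter_not univ (fun i => a i ≠ 0)]
      have e1 : ∏ i ∈ univ.filter (fun i => a i ≠ 0), w (a i) = 3^(wt a) :=
        Finset.prod_eq_pow_card fun i hi => by simp [hw, (mem_filter.mp hi).2]
      have e2 : ∏ i ∈ univ.filter (fun i => ¬ a i ≠ 0), w (a i)
          = (2*(q-1))^(m - wt a) := by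
        rw [Finset.prod_eq_pow_card (b := 2*(q-1)) (fun i hi => by
          have h0 := (mem_filter.mp hi).2
          simp only [ne_eq, not_not] at h0
          simp [hw, h0])]
        congr 1
        have hcc := Finset.card_filter_add_card_filter_not
          (s := univ) (p := fun i : Fin m => a i ≠ 0)
        simp only [card_univ, Fintype.card_fin] at hcc
        unfold wt
        clear hw
        omega
      rw [e1, e2]
    rw [hval]
    have h3 : (3:ℕ) ≤ 2*(q-1) := by clear hw; omega
    calc 3^k * (2*(q-1))^(m-k) = 3^(wt a) * 3^(k - wt a) * (2*(q-1))^(m-k) := by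
          rw [← pow_add]; congr 2; clear hw; omega
      _ ≤ 3^(wt a) * (2*(q-1))^(k - wt a) * (2*(q-1))^(m-k) :=
          Nat.mul_le_mul_right _ (Nat.mul_le_mul_left _ (Nat.pow_le_pow_left h3 _))
      _ = 3^(wt a) * (2*(q-1))^(m - wt a) := by
          rw [mul_assoc, ← pow_add]; congr 2; clear hw; omega
  have htotal : ∑ a : Fin m → Fin q, ∏ i, w (a i) = (5*(q-1))^m := by
    rw [← Fintype.piFinset_univ, Finset.sum_prod_piFinset]
    rw [Finset.prod_congr rfl fun i _ => hsumw, Finset.prod_const, card_univ,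
      Fintype.card_fin]
  calc (univ.filter fun a : Fin m → Fin q => wt a ≤ k).card * (3^k * (2*(q-1))^(m-k))
      = ∑ _a ∈ univ.filter (fun a : Fin m → Fin q => wt a ≤ k), 3^k * (2*(q-1))^(m-k) := by
        rw [Finset.sum_const, smul_eq_mul]
    _ ≤ ∑ a ∈ univ.filter (fun a : Fin m → Fin q => wt a ≤ k), ∏ i, w (a i) :=
        Finset.sum_le_sum fun a ha => hper a (mem_filter.mp ha).2
    _ ≤ ∑ a : Fin m → Fin q, ∏ i, w (a i) :=
        Finset.sum_le_sum_of_subset (filter_subset _ _)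
    _ = (5*(q-1))^m := htotal

lemma space_bound (hq : 3 ≤ q) (hp : p.Prime) {k : ℕ} (hk : k + 1 = p)
    (hkm : k ≤ m) (h53 : 5 * k ≤ 3 * m)
    (D : Finset (Fin m → Fin q))
    (hD : ∀ x ∈ D, ∀ y ∈ D, x ≠ y → ¬ (p ∣ hammingDist x y)) :
    D.card ^ 125 ≤ q ^ (124 * m) := by
  have h1 := frankl_core hp hk D hD
  have h2 := count_bound (m := m) hq hkm
  set Bc := (univ.filter fun a : Fin m → Fin q => wt a ≤ k).card with hBc
  set A := 3^k * (2*(q-1))^(m-k) with hA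
  clear_value Bc A
  have hApos : 0 < A := by
    rw [hA]; exact Nat.mul_pos (pow_pos (by norm_num) _) (pow_pos (by omega) _)
  have h3u : (3:ℕ) ≤ 2*(q-1) := by omega
  have hA125 : 3^(75*m) * (2*(q-1))^(50*m) ≤ A^125 := by
    rw [hA]
    have e1 : k*125 + (75*m - 125*k) = 75*m := by omega
    have e2 : 75*m - 125*k + 50*m = (m-k)*125 := by omega
    calc 3^(75*m) * (2*(q-1))^(50*m)
        = 3^(k*125) * (3^(75*m - 125*k) * (2*(q-1))^(50*m)) := by
          rw [← mul_assoc, ← pow_add, e1]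
      _ ≤ 3^(k*125) * ((2*(q-1))^(75*m - 125*k) * (2*(q-1))^(50*m)) :=
          Nat.mul_le_mul_left _ (Nat.mul_le_mul_right _ (Nat.pow_le_pow_left h3u _))
      _ = 3^(k*125) * (2*(q-1))^((m-k)*125) := by
          rw [← pow_add, e2]
      _ = (3^k)^125 * ((2*(q-1))^(m-k))^125 := by rw [pow_mul, pow_mul]
      _ = (3^k * (2*(q-1))^(m-k))^125 := (mul_pow _ _ _).symm
  have hbase : (5*(q-1))^125 ≤ 3^75 * (2*(q-1))^50 * q^124 := by
    have hkey := key_ineq hq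
    calc (5*(q-1))^125 = (5^125 * (q-1)^75) * (q-1)^50 := by ring
      _ ≤ (3^75 * 2^50 * q^124) * (q-1)^50 := Nat.mul_le_mul_right _ hkey
      _ = 3^75 * (2*(q-1))^50 * q^124 := by ring
  have hmain : (5*(q-1))^(125*m) ≤ 3^(75*m) * (2*(q-1))^(50*m) * q^(124*m) := by
    have hpow := Nat.pow_le_pow_left hbase m
    calc (5*(q-1))^(125*m) = ((5*(q-1))^125)^m := by rw [← pow_mul, Nat.mul_comm 125 m]
      _ ≤ (3^75 * (2*(q-1))^50 * q^124)^m := hpow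
      _ = (3^75)^m * ((2*(q-1))^50)^m * (q^124)^m := by rw [mul_pow, mul_pow]
      _ = 3^(75*m) * (2*(q-1))^(50*m) * q^(124*m) := by
          rw [← pow_mul, ← pow_mul, ← pow_mul]
  have hcard : D.card ^ 125 * A ^ 125 ≤ A^125 * q^(124*m) := by
    calc D.card ^ 125 * A ^ 125 = (D.card * A)^125 := (mul_pow _ _ _).symm
      _ ≤ (Bc * A)^125 := Nat.pow_le_pow_left (Nat.mul_le_mul_right _ h1) _
      _ ≤ ((5*(q-1))^m)^125 := Nat.pow_le_pow_left h2 _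
      _ = (5*(q-1))^(125*m) := by rw [← pow_mul, Nat.mul_comm m 125]
      _ ≤ 3^(75*m) * (2*(q-1))^(50*m) * q^(124*m) := hmain
      _ ≤ A^125 * q^(124*m) := Nat.mul_le_mul_right _ hA125
  have hApow : 0 < A ^ 125 := pow_pos hApos _
  exact Nat.le_of_mul_le_mul_left
    (by
      calc A^125 * (D.card ^ 125) = D.card ^ 125 * A ^ 125 := by ring
        _ ≤ A^125 * q^(124*m) := hcard) hApow

end FranklFPD

theorem forbidden_prime_distance (ε : ℝ) (hε : 0 < ε) (hε1 : ε < 1)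
    (q n p : ℕ) (hq : 3 ≤ q) (hp : p.Prime)
    (hpl : ε * n < p) (hpu : (p : ℝ) < 3 * n / 5)
    (C : Finset (Fin n → Fin q))
    (havoid : ∀ x ∈ C, ∀ y ∈ C, x ≠ y → hammingDist x y ≠ p) :
    (C.card : ℝ) ≤ (q : ℝ) ^ ((1 - ε / 125) * n) := by
  classical
  haveI : NeZero q := ⟨by omega⟩
  have h5p3n : 5 * p < 3 * n := by
    have h5 : (5:ℝ) * p < 3 * n := by linarith
    exact_mod_cast h5
  have hp2 : 2 ≤ p := hp.two_le
  set m := min n (2*p - 1) with hm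
  have hmn : m ≤ n := min_le_left _ _
  have hm2p : m ≤ 2*p - 1 := min_le_right _ _
  have hkm : p - 1 ≤ m := by omega
  have h53 : 5*(p-1) ≤ 3*m := by omega
  have hk : (p-1) + 1 = p := by omega
  set σ : (Fin n → Fin q) → ({ i : Fin n // m ≤ (i:ℕ)} → Fin q) := fun x i => x i.1 with hσ
  set π : (Fin n → Fin q) → (Fin m → Fin q) := fun x j => x (Fin.castLE hmn j) with hπ
  have fiber_bound : ∀ b, ((C.filter (fun x => σ x = b)).card)^125 ≤ q^(124*m) := by
    intro b
    set Cb := C.filter (fun x => σ x = b) with hCb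
    have hsuf : ∀ x ∈ Cb, ∀ y ∈ Cb, ∀ i : Fin n, m ≤ (i:ℕ) → x i = y i := by
      intro x hx y hy i hi
      have hx' := (mem_filter.mp hx).2
      have hy' := (mem_filter.mp hy).2
      exact congrFun (hx'.trans hy'.symm) ⟨i, hi⟩
    have hinj : Set.InjOn π Cb := by
      intro x hx y hy hxy
      funext i
      by_cases hi : (i:ℕ) < m
      · have hci : Fin.castLE hmn ⟨(i:ℕ), hi⟩ = i := by apply Fin.ext; rfl
        have := congrFun hxy ⟨(i:ℕ), hi⟩
        rw [hπ] at this
        simpa [hci] using this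
      · exact hsuf x hx y hy i (le_of_not_gt hi)
    have hdist : ∀ x ∈ Cb, ∀ y ∈ Cb, hammingDist (π x) (π y) = hammingDist x y := by
      intro x hx y hy
      have hset : (univ.filter fun i : Fin n => x i ≠ y i)
          = (univ.filter fun j : Fin m => π x j ≠ π y j).image (Fin.castLE hmn) := by
        ext i
        simp only [mem_filter, mem_univ, true_and, mem_image]
        constructor
        · intro hi
          have him : (i:ℕ) < m := by
            by_contra hc
            exact hi (hsuf x hx y hy i (le_of_not_gt hc))
          have hci : Fin.castLE hmn ⟨(i:ℕ), him⟩ = i := by apply Fin.ext; rfl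
          refine ⟨⟨(i:ℕ), him⟩, ?_, hci⟩
          show π x _ ≠ π y _
          rw [hπ]
          simpa [hci] using hi
        · rintro ⟨j, hj, rfl⟩
          simpa [hπ] using hj
      show (univ.filter fun j : Fin m => π x j ≠ π y j).card
          = (univ.filter fun i : Fin n => x i ≠ y i).card
      rw [hset, card_image_of_injective _ (Fin.castLE_injective hmn)]
    set D := Cb.image π with hD
    have hDcard : D.card = Cb.card := Finset.card_image_of_injOn hinj
    have hDav : ∀ u ∈ D, ∀ v ∈ D, u ≠ v → ¬ (p ∣ hammingDist u v) := by
      intro u hu v hv huv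
      obtain ⟨x, hx, rfl⟩ := mem_image.mp hu
      obtain ⟨y, hy, rfl⟩ := mem_image.mp hv
      have hxy : x ≠ y := fun h => huv (by rw [h])
      have hd : hammingDist (π x) (π y) = hammingDist x y := hdist x hx y hy
      rw [hd]
      have hne : hammingDist x y ≠ p :=
        havoid x (mem_filter.mp hx).1 y (mem_filter.mp hy).1 hxy
      have hpos : 0 < hammingDist x y :=
        Nat.pos_of_ne_zero fun h0 => hxy (hammingDist_eq_zero.mp h0)
      have hle : hammingDist x y ≤ m := by
        rw [← hd]
        calc hammingDist (π x) (π y) ≤ Fintype.card (Fin m) := hammingDist_le_card_fintype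
          _ = m := Fintype.card_fin m
      intro hdvd
      have hd1 : p ≤ hammingDist x y := Nat.le_of_dvd hpos hdvd
      have hd2 : p ∣ hammingDist x y - p := Nat.dvd_sub hdvd dvd_rfl
      have hd3 : p ≤ hammingDist x y - p := Nat.le_of_dvd (by omega) hd2
      omega
    have := FranklFPD.space_bound hq hp hk hkm h53 D hDav
    rw [hDcard] at this
    exact this
  -- real arithmetic
  have hq0 : (0:ℝ) < q := by positivity
  have hq1 : (1:ℝ) < q := by exact_mod_cast (by omega : 1 < q)
  set R : ℝ := (q:ℝ) ^ (((124 * m : ℕ) : ℝ) / 125) with hR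
  have hR0 : 0 ≤ R := Real.rpow_nonneg (le_of_lt hq0) _
  have hR125 : R ^ (125:ℕ) = (q:ℝ) ^ (124*m : ℕ) := by
    rw [hR, ← Real.rpow_natCast ((q:ℝ) ^ (((124 * m : ℕ) : ℝ) / 125)) 125,
      ← Real.rpow_mul (le_of_lt hq0), ← Real.rpow_natCast (q:ℝ) (124*m)]
    congr 1
    push_cast
    ring
  have hfibR : ∀ b, ((C.filter (fun x => σ x = b)).card : ℝ) ≤ R := by
    intro b
    have h := fiber_bound b
    have hcast : (((C.filter (fun x => σ x = b)).card : ℝ)) ^ (125:ℕ)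
        ≤ (q:ℝ) ^ (124*m : ℕ) := by exact_mod_cast h
    rw [← hR125] at hcast
    exact le_of_pow_le_pow_left₀ (by norm_num) hR0 hcast
  have hcount : (C.card : ℝ) ≤ ((q:ℝ) ^ (n - m : ℕ)) * R := by
    have h1 : C.card = ∑ b ∈ C.image σ, (C.filter (fun x => σ x = b)).card :=
      Finset.card_eq_sum_card_image σ C
    have hcardsub : Fintype.card { i : Fin n // m ≤ (i:ℕ)} = n - m := by
      rw [Fintype.card_subtype]
      have hinj2 : Function.Injective
          (fun (j : Fin (n-m)) => (⟨m + j.val, by have := j.isLt; omega⟩ : Fin n)) := by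
        intro a b hab
        have h2 : m + a.val = m + b.val := congrArg Fin.val hab
        exact Fin.ext (by omega)
      have himg : (univ.filter fun i : Fin n => m ≤ (i:ℕ))
          = univ.image (fun (j : Fin (n-m)) =>
              (⟨m + j.val, by have := j.isLt; omega⟩ : Fin n)) := by
        ext i
        simp only [mem_filter, mem_univ, true_and, mem_image]
        constructor
        · intro hi
          refine ⟨⟨(i:ℕ) - m, by have := i.isLt; omega⟩, ?_⟩
          exact Fin.ext (show m + ((i:ℕ) - m) = (i:ℕ) by omega)
        · rintro ⟨j, rfl⟩
          exact Nat.le_add_right m j.val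
      rw [himg, card_image_of_injective _ hinj2, card_univ, Fintype.card_fin]
    have hcardfun : Fintype.card ({ i : Fin n // m ≤ (i:ℕ)} → Fin q) = q ^ (n-m) := by
      rw [Fintype.card_fun, hcardsub, Fintype.card_fin]
    calc (C.card : ℝ) = ∑ b ∈ C.image σ, ((C.filter (fun x => σ x = b)).card : ℝ) := by
          rw [h1]; push_cast; rfl
      _ ≤ ∑ _b ∈ C.image σ, R := Finset.sum_le_sum fun b _ => hfibR b
      _ = ((C.image σ).card : ℝ) * R := by rw [Finset.sum_const, nsmul_eq_mul]
      _ ≤ _ := by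
          have h2 : (C.image σ).card ≤ q ^ (n - m) := hcardfun ▸ Finset.card_le_univ _
          exact mul_le_mul_of_nonneg_right (by exact_mod_cast h2) hR0
  have hεm : ε * (n:ℝ) ≤ (m:ℝ) := by
    rcases le_total n (2*p-1) with h | h
    · have hmeq : m = n := by rw [hm]; exact min_eq_left h
      rw [hmeq]
      calc ε * n ≤ 1 * n := mul_le_mul_of_nonneg_right hε1.le (Nat.cast_nonneg n)
        _ = n := one_mul _
    · have hmeq : m = 2*p-1 := by rw [hm]; exact min_eq_right h
      have hpm : (p:ℝ) ≤ (m:ℝ) := by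
        have hpm' : p ≤ m := by omega
        exact_mod_cast hpm'
      linarith
  have hfin : ((q:ℝ) ^ (n - m : ℕ)) * R ≤ (q:ℝ) ^ ((1 - ε/125) * n) := by
    rw [hR, ← Real.rpow_natCast (q:ℝ) (n - m), ← Real.rpow_add hq0]
    apply Real.rpow_le_rpow_of_exponent_le (le_of_lt hq1)
    have hc1 : ((n - m : ℕ):ℝ) = (n:ℝ) - (m:ℝ) := by
      rw [Nat.cast_sub hmn]
    rw [hc1]
    have hc2 : ((124 * m : ℕ) : ℝ) = 124 * (m:ℝ) := by push_cast; ring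
    rw [hc2]
    have hn0 : (0:ℝ) ≤ (n:ℝ) := Nat.cast_nonneg n
    linarith
  exact le_trans hcount hfin
end

section
/- Let ε ∈ (0,1/3) and q ≥ 3. Then every code C ⊆ [q]^n in which every pair of distinct words has Hamming distance at most (1 - ε)n satisfies |C| ≤ q^{(1 - ε/125)n}. -/
open Finset

namespace SDC
open scoped Classical



/-- Ballot/walk event: starting at time `a`, at some time `m` the number of elements
of `S` seen, doubled, exceeds elapsed time plus `t`. -/
def P (S : Finset ℕ) (a t : ℕ) : Prop :=
  ∃ m, m - a + t ≤ 2 * (S ∩ Finset.Ico a m).card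

lemma P_zero (S : Finset ℕ) (a : ℕ) : P S a 0 := ⟨a, by simp⟩

lemma inter_Ico_eq_of_not_mem {S : Finset ℕ} {a m : ℕ} (ha : a ∉ S) :
    S ∩ Finset.Ico a m = S ∩ Finset.Ico (a+1) m := by
  ext x
  simp only [mem_inter, Finset.mem_Ico]
  constructor
  · rintro ⟨hx, h1, h2⟩
    have hxa : x ≠ a := fun h => ha (h ▸ hx)
    exact ⟨hx, by omega, h2⟩
  · rintro ⟨hx, h1, h2⟩; exact ⟨hx, by omega, h2⟩

lemma insert_inter_Ico {S : Finset ℕ} {a m : ℕ} (ha : a ∉ S) (hm : a < m) :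
    insert a S ∩ Finset.Ico a m = insert a (S ∩ Finset.Ico (a+1) m) := by
  ext x
  simp only [mem_inter, Finset.mem_insert, Finset.mem_Ico]
  constructor
  · rintro ⟨hx | hx, h1, h2⟩
    · exact Or.inl hx
    · right; refine ⟨hx, ?_, h2⟩
      rcases Nat.eq_or_lt_of_le h1 with h | h
      · exact absurd (h ▸ hx) ha
      · omega
  · rintro (rfl | ⟨hx, h1, h2⟩)
    · exact ⟨Or.inl rfl, le_refl _, hm⟩
    · exact ⟨Or.inr hx, by omega, h2⟩

lemma P_not_mem {S : Finset ℕ} {a t : ℕ} (ha : a ∉ S) (ht : 1 ≤ t) :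
    P S a t ↔ P S (a+1) (t+1) := by
  constructor
  · rintro ⟨m, hm⟩
    have hma : a + 1 ≤ m := by
      by_contra h
      have : Finset.Ico a m = ∅ := by
        apply Finset.Ico_eq_empty; omega
      rw [this] at hm; simp at hm; omega
    refine ⟨m, ?_⟩
    rw [inter_Ico_eq_of_not_mem ha] at hm
    omega
  · rintro ⟨m, hm⟩
    have hma : a + 1 ≤ m ∨ (S ∩ Finset.Ico (a+1) m).card = 0 := by
      by_cases h : a + 1 ≤ m
      · exact Or.inl h
      · right
        have : Finset.Ico (a+1) m = ∅ := by apply Finset.Ico_eq_empty; omega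
        rw [this]; simp
    rcases hma with hma | hzero
    · exact ⟨m, by rw [inter_Ico_eq_of_not_mem ha]; omega⟩
    · rw [hzero] at hm; omega

lemma P_mem {S : Finset ℕ} {a t : ℕ} (ha : a ∉ S) (ht : 1 ≤ t) :
    P (insert a S) a t ↔ P S (a+1) (t-1) := by
  constructor
  · rintro ⟨m, hm⟩
    have hma : a + 1 ≤ m := by
      by_contra h
      have : Finset.Ico a m = ∅ := by apply Finset.Ico_eq_empty; omega
      rw [this] at hm; simp at hm; omega
    rw [insert_inter_Ico ha (by omega)] at hm
    rw [Finset.card_insert_of_notMem (by simp [Finset.mem_Ico])] at hm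
    exact ⟨m, by omega⟩
  · rintro ⟨m, hm⟩
    by_cases hma : a + 1 ≤ m
    · refine ⟨m, ?_⟩
      rw [insert_inter_Ico ha (by omega),
        Finset.card_insert_of_notMem (by simp [Finset.mem_Ico])]
      omega
    · have : Finset.Ico (a+1) m = ∅ := by apply Finset.Ico_eq_empty; omega
      rw [this] at hm; simp at hm
      refine ⟨a+1, ?_⟩
      rw [insert_inter_Ico ha (by omega),
        Finset.card_insert_of_notMem (by simp [Finset.mem_Ico])]
      omega

lemma binom_powerset (A : Finset ℕ) (c : ℕ) :
    ∑ S ∈ A.powerset, c ^ (A.card - S.card) = (1 + c) ^ A.card := by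
  have h := Finset.prod_add (fun _ : ℕ => (1:ℕ)) (fun _ => c) A
  simp only [Finset.prod_const_one, one_mul, Finset.prod_const] at h
  rw [h]
  apply Finset.sum_congr rfl
  intro S hS
  rw [Finset.card_sdiff_of_subset (Finset.mem_powerset.mp hS)]

lemma walk_bound (q : ℕ) (hq : 2 ≤ q) :
    ∀ d a t, (q-1)^t *
      ∑ S ∈ (Finset.Ico a (a+d)).powerset.filter (fun S => P S a t), (q-1)^(d - S.card)
      ≤ q^d := by
  intro d
  induction d with
  | zero =>
    intro a t
    simp only [Nat.add_zero, Finset.Ico_self, Finset.powerset_empty]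
    rcases Nat.eq_zero_or_pos t with rfl | ht
    · rw [Finset.filter_true_of_mem (by intro S _; exact P_zero S a)]
      simp
    · rw [Finset.filter_false_of_mem]
      · simp
      · intro S hS
        simp only [Finset.mem_singleton] at hS
        subst hS
        rintro ⟨m, hm⟩
        simp at hm; omega
  | succ d ih =>
    intro a t
    have hA : Finset.Ico a (a + (d+1)) = insert a (Finset.Ico (a+1) (a+1+d)) := by
      rw [show a+1+d = a + (d+1) by omega]
      rw [Finset.insert_Ico_add_one_left_eq_Ico (by omega)]
    have hanotB : a ∉ Finset.Ico (a+1) (a+1+d) := by simp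
    rw [hA, Finset.sum_filter, Finset.sum_powerset_insert hanotB]
    rcases Nat.eq_zero_or_pos t with rfl | ht
    · -- t = 0 : everything satisfies P, binomial sum
      simp only [pow_zero, one_mul]
      have h1 : ∀ S ∈ (Finset.Ico (a+1) (a+1+d)).powerset,
          (if P S a 0 then (q-1)^(d+1-S.card) else 0) = (q-1)^(d+1-S.card) := by
        intro S _; rw [if_pos (P_zero S a)]
      have h2 : ∀ S ∈ (Finset.Ico (a+1) (a+1+d)).powerset,
          (if P (insert a S) a 0 then (q-1)^(d+1-(insert a S).card) else 0)
            = (q-1)^(d+1-(insert a S).card) := by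
        intro S _; rw [if_pos (P_zero _ a)]
      rw [Finset.sum_congr rfl h1, Finset.sum_congr rfl h2]
      have hcard : (Finset.Ico (a+1) (a+1+d)).card = d := by simp
      have hback : ∑ S ∈ (Finset.Ico (a+1) (a+1+d)).powerset, (q-1)^(d+1-S.card)
            + ∑ S ∈ (Finset.Ico (a+1) (a+1+d)).powerset, (q-1)^(d+1-(insert a S).card)
          = ∑ S ∈ (insert a (Finset.Ico (a+1) (a+1+d))).powerset, (q-1)^(d+1-S.card) := by
        rw [Finset.sum_powerset_insert hanotB]
      rw [hback]
      have := binom_powerset (insert a (Finset.Ico (a+1) (a+1+d))) (q-1)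
      rw [Finset.card_insert_of_notMem hanotB, hcard] at this
      rw [this]
      have : 1 + (q-1) = q := by omega
      rw [this]
    · -- t ≥ 1
      have hrw1 : ∀ S ∈ (Finset.Ico (a+1) (a+1+d)).powerset,
          (if P S a t then (q-1)^(d+1-S.card) else 0)
            = (q-1) * (if P S (a+1) (t+1) then (q-1)^(d-S.card) else 0) := by
        intro S hS
        have hanotS : a ∉ S := fun h => hanotB (Finset.mem_powerset.mp hS h)
        have hcard : S.card ≤ d := by
          have := Finset.card_le_card (Finset.mem_powerset.mp hS)
          simpa using this
        rw [P_not_mem hanotS ht]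
        by_cases h : P S (a+1) (t+1)
        · rw [if_pos h, if_pos h, show d+1-S.card = (d-S.card)+1 by omega, pow_succ]
          ring
        · rw [if_neg h, if_neg h, mul_zero]
      have hrw2 : ∀ S ∈ (Finset.Ico (a+1) (a+1+d)).powerset,
          (if P (insert a S) a t then (q-1)^(d+1-(insert a S).card) else 0)
            = (if P S (a+1) (t-1) then (q-1)^(d-S.card) else 0) := by
        intro S hS
        have hanotS : a ∉ S := fun h => hanotB (Finset.mem_powerset.mp hS h)
        have hcard : S.card ≤ d := by
          have := Finset.card_le_card (Finset.mem_powerset.mp hS)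
          simpa using this
        have hce : d+1-(insert a S).card = d - S.card := by
          rw [Finset.card_insert_of_notMem hanotS]; omega
        rw [P_mem hanotS ht, hce]
      rw [Finset.sum_congr rfl hrw1, Finset.sum_congr rfl hrw2, ← Finset.mul_sum]
      rw [← Finset.sum_filter, ← Finset.sum_filter]
      have ih1 := ih (a+1) (t+1)
      have ih2 := ih (a+1) (t-1)
      set W1 := ∑ S ∈ (Finset.Ico (a+1) (a+1+d)).powerset.filter (fun S => P S (a+1) (t+1)),
        (q-1)^(d-S.card) with hW1
      set W2 := ∑ S ∈ (Finset.Ico (a+1) (a+1+d)).powerset.filter (fun S => P S (a+1) (t-1)),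
        (q-1)^(d-S.card) with hW2
      calc (q-1)^t * ((q-1) * W1 + W2)
          = (q-1)^(t+1) * W1 + (q-1) * ((q-1)^(t-1) * W2) := by
            rw [mul_add, pow_succ]
            have : (q-1)^t = (q-1) * (q-1)^(t-1) := by
              rw [← pow_succ']
              congr 1; omega
            rw [this]; ring
        _ ≤ q^d + (q-1) * q^d := by
            gcongr
        _ = (1 + (q-1)) * q^d := by ring
        _ = q^(d+1) := by
            rw [show 1 + (q-1) = q by omega, pow_succ]; ring




lemma card_inter_range_succ (A : Finset ℕ) (m : ℕ) :
    (A ∩ Finset.range (m+1)).card = (A ∩ Finset.range m).card + if m ∈ A then 1 else 0 := by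
  rw [Finset.range_add_one]
  by_cases h : m ∈ A
  · rw [if_pos h]
    have : A ∩ insert m (Finset.range m) = insert m (A ∩ Finset.range m) := by
      ext x; simp only [mem_inter, mem_insert, Finset.mem_range]
      constructor
      · rintro ⟨hx, rfl | hx2⟩
        · exact Or.inl rfl
        · exact Or.inr ⟨hx, hx2⟩
      · rintro (rfl | ⟨hx, hx2⟩)
        · exact ⟨h, Or.inl rfl⟩
        · exact ⟨hx, Or.inr hx2⟩
    rw [this, Finset.card_insert_of_notMem (by simp)]
  · rw [if_neg h]
    have : A ∩ insert m (Finset.range m) = A ∩ Finset.range m := by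
      ext x; simp only [mem_inter, mem_insert, Finset.mem_range]
      constructor
      · rintro ⟨hx, rfl | hx2⟩
        · exact absurd hx h
        · exact ⟨hx, hx2⟩
      · rintro ⟨hx, hx2⟩; exact ⟨hx, Or.inr hx2⟩
    rw [this, add_zero]

lemma card_inter_range_mono (A : Finset ℕ) {m m' : ℕ} (h : m ≤ m') :
    (A ∩ Finset.range m).card ≤ (A ∩ Finset.range m').card :=
  Finset.card_le_card (Finset.inter_subset_inter (le_refl A) (by
    intro x hx; simp only [Finset.mem_range] at *; omega))

lemma card_inter_range_le (A : Finset ℕ) (m : ℕ) : (A ∩ Finset.range m).card ≤ m := by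
  calc (A ∩ Finset.range m).card ≤ (Finset.range m).card :=
        Finset.card_le_card (Finset.inter_subset_right)
    _ = m := Finset.card_range m

lemma exists_eq_of_steps (g : ℕ → ℕ) (h0 : g 0 = 0) (hstep : ∀ m, g (m+1) ≤ g m + 1)
    (d : ℕ) : ∀ M, d ≤ g M → ∃ θ, g θ = d := by
  intro M
  induction M with
  | zero => intro h; exact ⟨0, by omega⟩
  | succ M ih =>
    intro h
    by_cases h' : d ≤ g M
    · exact ih h'
    · exact ⟨M+1, by have := hstep M; omega⟩

lemma ballot_construct (S : Finset ℕ) (n t : ℕ) (ht : 1 ≤ t) (hSn : S ⊆ Finset.range n)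
    (hk : t ≤ S.card) (hfail : ¬ P S 0 t) :
    ∃ T : Finset ℕ, T.card = S.card ∧ (S ∩ T).card + 1 ≤ t ∧
      ∀ m, (S ∩ Finset.range m).card ≤ (T ∩ Finset.range m).card := by
  set k := S.card with hkdef
  have hfail0 : ∀ m, 2 * (S ∩ Finset.range m).card + 1 ≤ m + t := by
    intro m
    by_contra h
    exact hfail ⟨m, by rw [← Finset.range_eq_Ico]; omega⟩
  set c : ℕ → ℕ := fun m => (S ∩ Finset.range m).card with hc
  have hfail' : ∀ m, 2 * c m + 1 ≤ m + t := hfail0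
  have hc0 : c 0 = 0 := by simp [hc]
  have hcsucc : ∀ m, c (m+1) = c m + if m ∈ S then 1 else 0 := fun m => card_inter_range_succ S m
  have hcmono : ∀ {m m'}, m ≤ m' → c m ≤ c m' := fun h => card_inter_range_mono S h
  have hcle : ∀ m, c m ≤ m := card_inter_range_le S
  have hcn : ∀ m, n ≤ m → c m = k := by
    intro m hm
    have : S ∩ Finset.range m = S := by
      apply Finset.inter_eq_left.mpr
      intro x hx
      have := hSn hx
      simp only [Finset.mem_range] at *
      omega
    simp [hc, this, hkdef]
  have hkn : k ≤ n := by
    have := hcle n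
    rw [hcn n (le_refl n)] at this
    exact this
  -- record set
  set R : Finset ℕ := S.filter (fun s => ∀ m ≤ s, 2 * c m + s + 1 < 2 * c (s+1) + m) with hR
  have hRS : R ⊆ S := Finset.filter_subset _ _
  -- R1 : card of records dominates the walk
  have R1 : ∀ m, ∀ j ≤ m, 2 * c j ≤ j + (R ∩ Finset.range m).card := by
    intro m
    induction m with
    | zero => intro j hj; interval_cases j; simp [hc0]
    | succ m ih =>
      intro j hj
      rcases Nat.lt_or_ge j (m+1) with hjm | hjm
      · have := ih j (by omega)
        have := card_inter_range_mono R (show m ≤ m+1 by omega)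
        omega
      · have hj' : j = m + 1 := by omega
        subst hj'
        by_cases hrec : ∀ i ≤ m, 2 * c i + m + 1 < 2 * c (m+1) + i
        · have hmS : m ∈ S := by
            have h1 := hrec m (le_refl m)
            have h2 := hcsucc m
            by_contra hm
            rw [if_neg hm] at h2
            omega
          have hmR : m ∈ R := by
            rw [hR, Finset.mem_filter]
            exact ⟨hmS, hrec⟩
          have hcard : (R ∩ Finset.range (m+1)).card = (R ∩ Finset.range m).card + 1 := by
            rw [card_inter_range_succ, if_pos hmR]
          have h2 := hcsucc m
          rw [if_pos hmS] at h2
          have := ih m (le_refl m)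
          omega
        · push_neg at hrec
          obtain ⟨i, hi, hrec⟩ := hrec
          have := ih i hi
          have := card_inter_range_mono R (show m ≤ m+1 by omega)
          omega
  -- R2 : few records
  have hvadd : ∀ s ∈ R, s + 1 + (2 * c (s+1) - (s+1)) = 2 * c (s+1) ∧ 1 ≤ 2 * c (s+1) - (s+1) := by
    intro s hs
    rw [hR, Finset.mem_filter] at hs
    have := hs.2 0 (by omega)
    rw [hc0] at this
    omega
  have hvmono : ∀ s ∈ R, ∀ s' ∈ R, s < s' → 2 * c (s+1) - (s+1) < 2 * c (s'+1) - (s'+1) := by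
    intro s hs s' hs' hss
    have h1 := (hvadd s hs).1
    have h2 := (hvadd s' hs').1
    rw [hR, Finset.mem_filter] at hs'
    have := hs'.2 (s+1) (by omega)
    omega
  have R2 : R.card + 1 ≤ t := by
    have hinj : ∀ s ∈ R, ∀ s' ∈ R, (2*c (s+1) - (s+1)) = (2*c (s'+1) - (s'+1)) → s = s' := by
      intro s hs s' hs' heq
      rcases lt_trichotomy s s' with h | h | h
      · exact absurd heq (by have := hvmono s hs s' hs' h; omega)
      · exact h
      · exact absurd heq (by have := hvmono s' hs' s hs h; omega)
    have hmaps : ∀ s ∈ R, (2*c (s+1) - (s+1)) ∈ Finset.Icc 1 (t-1) := by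
      intro s hs
      have h1 := (hvadd s hs).1
      have h2 := (hvadd s hs).2
      have h3 := hfail' (s+1)
      simp only [Finset.mem_Icc]
      omega
    have := Finset.card_le_card_of_injOn _ hmaps hinj
    rw [Nat.card_Icc] at this
    omega
  have hRk : R.card ≤ k := Finset.card_le_card hRS
  -- the complement-pick set
  set g : ℕ → ℕ := fun m => ((Finset.range m).filter (· ∉ S)).card with hg
  have hgc : ∀ m, g m + c m = m := by
    intro m
    have h1 := Finset.card_filter_add_card_filter_not (s := Finset.range m)
      (p := fun x => x ∉ S)
    have h2 : (Finset.range m).filter (fun a => ¬ (fun x => x ∉ S) a) = S ∩ Finset.range m := by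
      ext x
      simp only [Finset.mem_filter, Finset.mem_inter, Finset.mem_range, not_not]
      tauto
    rw [h2, Finset.card_range] at h1
    simp only [hg, hc]
    omega
  set d : ℕ := k - R.card with hd
  have hstep : ∀ m, g (m+1) ≤ g m + 1 := by
    intro m
    simp only [hg, Finset.range_add_one, Finset.filter_insert]
    by_cases h : m ∉ S
    · rw [if_pos h, Finset.card_insert_of_notMem (by simp)]
    · rw [if_neg h]
      omega
  obtain ⟨θ, hθ⟩ : ∃ θ, g θ = d := by
    apply exists_eq_of_steps g (by simp [hg]) hstep d (n + k)
    have h1 := hgc (n+k)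
    have h2 := hcn (n+k) (by omega)
    omega
  set T2 : Finset ℕ := (Finset.range θ).filter (· ∉ S) with hT2
  have hT2card : T2.card = d := hθ
  have hT2S : ∀ x ∈ T2, x ∉ S := by
    intro x hx
    rw [hT2, Finset.mem_filter] at hx
    exact hx.2
  have hdisj : Disjoint R T2 := by
    rw [Finset.disjoint_left]
    intro x hx hx2
    exact hT2S x hx2 (hRS hx)
  refine ⟨R ∪ T2, ?_, ?_, ?_⟩
  · rw [Finset.card_union_of_disjoint hdisj, hT2card]
    omega
  · have : S ∩ (R ∪ T2) = R := by
      ext x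
      simp only [Finset.mem_inter, Finset.mem_union]
      constructor
      · rintro ⟨hxS, hxR | hxT⟩
        · exact hxR
        · exact absurd hxS (hT2S x hxT)
      · intro hx
        exact ⟨hRS hx, Or.inl hx⟩
    rw [this]
    exact R2
  · intro m
    have hsplit : ((R ∪ T2) ∩ Finset.range m).card
        = (R ∩ Finset.range m).card + (T2 ∩ Finset.range m).card := by
      rw [Finset.union_inter_distrib_right]
      exact Finset.card_union_of_disjoint (Finset.disjoint_of_subset_left
        Finset.inter_subset_left (Finset.disjoint_of_subset_right Finset.inter_subset_left hdisj))
    rw [hsplit]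
    rcases le_or_gt m θ with hmθ | hmθ
    · -- T2 ∩ range m = (range m).filter (∉ S)
      have : T2 ∩ Finset.range m = (Finset.range m).filter (· ∉ S) := by
        ext x
        simp only [hT2, Finset.mem_inter, Finset.mem_filter, Finset.mem_range]
        constructor
        · rintro ⟨⟨h1, h2⟩, h3⟩; exact ⟨h3, h2⟩
        · rintro ⟨h1, h2⟩; exact ⟨⟨by omega, h2⟩, h1⟩
      rw [this]
      have hgm : ((Finset.range m).filter (· ∉ S)).card = g m := rfl
      rw [hgm]
      have hcm : (S ∩ Finset.range m).card = c m := rfl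
      have h1 := R1 m m (le_refl m)
      have h2 := hgc m
      omega
    · -- m > θ : T2 ∩ range m = T2
      have : T2 ∩ Finset.range m = T2 := by
        apply Finset.inter_eq_left.mpr
        intro x hx
        rw [hT2, Finset.mem_filter, Finset.mem_range] at hx
        rw [Finset.mem_range]
        omega
      rw [this, hT2card]
      -- c m ≤ |R ∩ range m| + d
      have h1 : (R ∩ Finset.range m).card + (R \ Finset.range m).card = R.card :=
        Finset.card_inter_add_card_sdiff R (Finset.range m)
      have h2 : (S ∩ Finset.range m).card + (S \ Finset.range m).card = S.card :=
        Finset.card_inter_add_card_sdiff S (Finset.range m)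
      have h3 : (R \ Finset.range m).card ≤ (S \ Finset.range m).card :=
        Finset.card_le_card (Finset.sdiff_subset_sdiff hRS (le_refl _))
      have hcm : (S ∩ Finset.range m).card = c m := rfl
      omega




def Reduced (F : Finset (Finset ℕ)) : Prop :=
  ∀ S ∈ F, ∀ i j : ℕ, i < j → j ∈ S → i ∉ S → insert i (S.erase j) ∈ F

def Intersecting (F : Finset (Finset ℕ)) (t : ℕ) : Prop :=
  ∀ S ∈ F, ∀ T ∈ F, t ≤ (S ∩ T).card

lemma dominated_mem (F : Finset (Finset ℕ)) (hred : Reduced F) :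
    ∀ N S T, S.sum id ≤ N → S ∈ F → T.card = S.card →
      (∀ m, (S ∩ Finset.range m).card ≤ (T ∩ Finset.range m).card) → T ∈ F := by
  intro N
  induction N using Nat.strong_induction_on with
  | _ N ih =>
  intro S T hsum hS hcard hdom
  by_cases hST : T = S
  · exact hST ▸ hS
  have hSdT : (S \ T).Nonempty := by
    rw [Finset.sdiff_nonempty]
    intro hsub
    exact hST (Finset.eq_of_subset_of_card_le hsub (le_of_eq hcard)).symm
  have hTdS : (T \ S).Nonempty := by
    rw [Finset.sdiff_nonempty]
    intro hsub
    exact hST (Finset.eq_of_subset_of_card_le hsub (le_of_eq hcard.symm))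
  set j := (S \ T).min' hSdT with hj
  set i := (T \ S).min' hTdS with hi
  have hjS : j ∈ S ∧ j ∉ T := by
    have := (S \ T).min'_mem hSdT
    rw [Finset.mem_sdiff] at this
    exact this
  have hiT : i ∈ T ∧ i ∉ S := by
    have := (T \ S).min'_mem hTdS
    rw [Finset.mem_sdiff] at this
    exact this
  have hij : i < j := by
    rcases lt_trichotomy i j with h | h | h
    · exact h
    · exact absurd (h ▸ hiT.1) hjS.2
    · -- j < i : contradiction via hdom (j+1)
      exfalso
      have hsub : T ∩ Finset.range (j+1) ⊆ (S ∩ Finset.range (j+1)).erase j := by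
        intro x hx
        rw [Finset.mem_inter, Finset.mem_range] at hx
        rw [Finset.mem_erase, Finset.mem_inter, Finset.mem_range]
        have hxS : x ∈ S := by
          by_contra hxS
          have hxTS : x ∈ T \ S := Finset.mem_sdiff.mpr ⟨hx.1, hxS⟩
          have := (T \ S).min'_le x hxTS
          omega
        have hxj : x ≠ j := fun hxj => hjS.2 (hxj ▸ hx.1)
        exact ⟨hxj, hxS, hx.2⟩
      have h1 := Finset.card_le_card hsub
      have h2 : j ∈ S ∩ Finset.range (j+1) := by
        rw [Finset.mem_inter, Finset.mem_range]
        exact ⟨hjS.1, by omega⟩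
      rw [Finset.card_erase_of_mem h2] at h1
      have h3 := hdom (j+1)
      have h4 : 1 ≤ (S ∩ Finset.range (j+1)).card := Finset.card_pos.mpr ⟨j, h2⟩
      omega
  set S' := insert i (S.erase j) with hS'def
  have hS' : S' ∈ F := hred S hS i j hij hjS.1 hiT.2
  have hinotE : i ∉ S.erase j := fun h => hiT.2 (Finset.mem_of_mem_erase h)
  have hcard' : S'.card = S.card := by
    rw [hS'def, Finset.card_insert_of_notMem hinotE, Finset.card_erase_of_mem hjS.1]
    have : 1 ≤ S.card := Finset.card_pos.mpr ⟨j, hjS.1⟩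
    omega
  have hsum' : S'.sum id + j = S.sum id + i := by
    rw [hS'def, Finset.sum_insert hinotE]
    have := Finset.sum_erase_add S id hjS.1
    simp only [id] at *
    omega
  have hsumlt : S'.sum id < S.sum id := by omega
  have hdom' : ∀ m, (S' ∩ Finset.range m).card ≤ (T ∩ Finset.range m).card := by
    intro m
    rcases le_or_gt m i with hmi | hmi
    · have : S' ∩ Finset.range m = S ∩ Finset.range m := by
        ext x
        simp only [hS'def, Finset.mem_inter, Finset.mem_insert, Finset.mem_erase,
          Finset.mem_range]
        constructor
        · rintro ⟨rfl | ⟨hxj, hxS⟩, hxm⟩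
          · omega
          · exact ⟨hxS, hxm⟩
        · rintro ⟨hxS, hxm⟩
          have : x ≠ j := by omega
          exact ⟨Or.inr ⟨this, hxS⟩, hxm⟩
      rw [this]
      exact hdom m
    · rcases le_or_gt m j with hmj | hmj
      · -- i < m ≤ j
        have heq : S' ∩ Finset.range m = insert i (S ∩ Finset.range m) := by
          ext x
          simp only [hS'def, Finset.mem_inter, Finset.mem_insert, Finset.mem_erase,
            Finset.mem_range]
          constructor
          · rintro ⟨rfl | ⟨hxj, hxS⟩, hxm⟩
            · exact Or.inl rfl
            · exact Or.inr ⟨hxS, hxm⟩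
          · rintro (rfl | ⟨hxS, hxm⟩)
            · exact ⟨Or.inl rfl, hmi⟩
            · exact ⟨Or.inr ⟨by omega, hxS⟩, hxm⟩
        have hsub : insert i (S ∩ Finset.range m) ⊆ T ∩ Finset.range m := by
          intro x hx
          rw [Finset.mem_insert] at hx
          rw [Finset.mem_inter, Finset.mem_range]
          rcases hx with rfl | hx
          · exact ⟨hiT.1, hmi⟩
          · rw [Finset.mem_inter, Finset.mem_range] at hx
            refine ⟨?_, hx.2⟩
            by_contra hxT
            have hxST : x ∈ S \ T := Finset.mem_sdiff.mpr ⟨hx.1, hxT⟩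
            have := (S \ T).min'_le x hxST
            omega
        rw [heq]
        exact Finset.card_le_card hsub
      · -- j < m
        have heq : S' ∩ Finset.range m = insert i ((S ∩ Finset.range m).erase j) := by
          ext x
          simp only [hS'def, Finset.mem_inter, Finset.mem_insert, Finset.mem_erase,
            Finset.mem_range]
          constructor
          · rintro ⟨rfl | ⟨hxj, hxS⟩, hxm⟩
            · exact Or.inl rfl
            · exact Or.inr ⟨hxj, hxS, hxm⟩
          · rintro (rfl | ⟨hxj, hxS, hxm⟩)
            · exact ⟨Or.inl rfl, by omega⟩
            · exact ⟨Or.inr ⟨hxj, hxS⟩, hxm⟩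
        have hjm : j ∈ S ∩ Finset.range m := by
          rw [Finset.mem_inter, Finset.mem_range]; exact ⟨hjS.1, hmj⟩
        have hine : i ∉ (S ∩ Finset.range m).erase j := by
          intro h
          exact hiT.2 (Finset.mem_inter.mp (Finset.mem_of_mem_erase h)).1
        rw [heq, Finset.card_insert_of_notMem hine, Finset.card_erase_of_mem hjm]
        have h4 : 1 ≤ (S ∩ Finset.range m).card := Finset.card_pos.mpr ⟨j, hjm⟩
        have := hdom m
        omega
  exact ih (S'.sum id) (by omega) S' T (le_refl _) hS' (hcard.trans hcard'.symm) hdom'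




lemma exists_reduced (t n : ℕ) :
    ∀ N (F : Finset (Finset ℕ)), (∑ S ∈ F, S.sum id) ≤ N →
    Intersecting F t → (∀ S ∈ F, S ⊆ Finset.range n) →
    ∃ F' : Finset (Finset ℕ), Intersecting F' t ∧ (∀ S ∈ F', S ⊆ Finset.range n) ∧ Reduced F' ∧
      ∀ w : ℕ → ℕ, ∑ S ∈ F', w S.card = ∑ S ∈ F, w S.card := by
  intro N
  induction N using Nat.strong_induction_on with
  | _ N ih =>
  intro F hsum hint hrange
  by_cases hred : Reduced F
  · exact ⟨F, hint, hrange, hred, fun w => rfl⟩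
  · rw [Reduced] at hred
    push_neg at hred
    obtain ⟨S₀, hS₀, i, j, hij, hjS₀, hiS₀, hS₀'⟩ := hred
    set σ : Finset ℕ → Finset ℕ :=
      fun S => if j ∈ S ∧ i ∉ S ∧ insert i (S.erase j) ∉ F then insert i (S.erase j) else S
      with hσ
    have hσ_moved : ∀ S, (j ∈ S ∧ i ∉ S ∧ insert i (S.erase j) ∉ F) →
        σ S = insert i (S.erase j) := by
      intro S h; rw [hσ]; simp only [if_pos h]
    have hσ_not : ∀ S, ¬(j ∈ S ∧ i ∉ S ∧ insert i (S.erase j) ∉ F) → σ S = S := by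
      intro S h; rw [hσ]; simp only [if_neg h]
    -- injectivity on F
    have hinj : Set.InjOn σ F := by
      intro u hu v hv huv
      by_cases cu : j ∈ u ∧ i ∉ u ∧ insert i (u.erase j) ∉ F
      · by_cases cv : j ∈ v ∧ i ∉ v ∧ insert i (v.erase j) ∉ F
        · rw [hσ_moved u cu, hσ_moved v cv] at huv
          have h1 : u.erase j = v.erase j := by
            have hiu : i ∉ u.erase j := fun h => cu.2.1 (Finset.mem_of_mem_erase h)
            have hiv : i ∉ v.erase j := fun h => cv.2.1 (Finset.mem_of_mem_erase h)
            have := congrArg (fun s => Finset.erase s i) huv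
            simpa [Finset.erase_insert hiu, Finset.erase_insert hiv] using this
          rw [← Finset.insert_erase cu.1, ← Finset.insert_erase cv.1, h1]
        · rw [hσ_moved u cu, hσ_not v cv] at huv
          exact absurd (huv ▸ hv) cu.2.2
      · by_cases cv : j ∈ v ∧ i ∉ v ∧ insert i (v.erase j) ∉ F
        · rw [hσ_not u cu, hσ_moved v cv] at huv
          exact absurd (huv ▸ hu) cv.2.2
        · rw [hσ_not u cu, hσ_not v cv] at huv
          exact huv
    have hcard_pres : ∀ S, (σ S).card = S.card := by
      intro S
      by_cases c : j ∈ S ∧ i ∉ S ∧ insert i (S.erase j) ∉ F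
      · rw [hσ_moved S c, Finset.card_insert_of_notMem
          (fun h => c.2.1 (Finset.mem_of_mem_erase h)), Finset.card_erase_of_mem c.1]
        have : 1 ≤ S.card := Finset.card_pos.mpr ⟨j, c.1⟩
        omega
      · rw [hσ_not S c]
    set F1 := F.image σ with hF1
    -- mixed case helper
    have mixed : ∀ S ∈ F, ∀ T ∈ F, (j ∈ S ∧ i ∉ S ∧ insert i (S.erase j) ∉ F) →
        ¬(j ∈ T ∧ i ∉ T ∧ insert i (T.erase j) ∉ F) → t ≤ ((σ S) ∩ (σ T)).card := by
      intro S hS T hT cS cT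
      rw [hσ_moved S cS, hσ_not T cT]
      by_cases hjT : j ∈ T
      · by_cases hiT : i ∈ T
        · -- i ∈ T, j ∈ T
          have hsub : insert i ((S ∩ T).erase j) ⊆ insert i (S.erase j) ∩ T := by
            intro x hx
            rw [Finset.mem_insert] at hx
            rw [Finset.mem_inter, Finset.mem_insert]
            rcases hx with rfl | hx
            · exact ⟨Or.inl rfl, hiT⟩
            · rw [Finset.mem_erase, Finset.mem_inter] at hx
              exact ⟨Or.inr (Finset.mem_erase.mpr ⟨hx.1, hx.2.1⟩), hx.2.2⟩
          have h1 := Finset.card_le_card hsub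
          have hine : i ∉ (S ∩ T).erase j := fun h =>
            cS.2.1 (Finset.mem_inter.mp (Finset.mem_of_mem_erase h)).1
          have hjm : j ∈ S ∩ T := Finset.mem_inter.mpr ⟨cS.1, hjT⟩
          rw [Finset.card_insert_of_notMem hine, Finset.card_erase_of_mem hjm] at h1
          have h2 := hint S hS T hT
          have h3 : 1 ≤ (S ∩ T).card := Finset.card_pos.mpr ⟨j, hjm⟩
          omega
        · -- j ∈ T, i ∉ T, so insert i (T.erase j) ∈ F
          have hT'' : insert i (T.erase j) ∈ F := by
            by_contra h
            exact cT ⟨hjT, hiT, h⟩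
          have h2 := hint S hS _ hT''
          have heq : S ∩ insert i (T.erase j) = insert i (S.erase j) ∩ T := by
            ext x
            simp only [Finset.mem_inter, Finset.mem_insert, Finset.mem_erase]
            constructor
            · rintro ⟨hxS, rfl | ⟨hxj, hxT⟩⟩
              · exact absurd hxS cS.2.1
              · exact ⟨Or.inr ⟨hxj, hxS⟩, hxT⟩
            · rintro ⟨rfl | ⟨hxj, hxS⟩, hxT⟩
              · exact absurd hxT hiT
              · exact ⟨hxS, Or.inr ⟨hxj, hxT⟩⟩
          rw [heq] at h2
          exact h2
      · -- j ∉ T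
        have hsub : S ∩ T ⊆ insert i (S.erase j) ∩ T := by
          intro x hx
          rw [Finset.mem_inter] at hx
          rw [Finset.mem_inter, Finset.mem_insert]
          have hxj : x ≠ j := fun h => hjT (h ▸ hx.2)
          exact ⟨Or.inr (Finset.mem_erase.mpr ⟨hxj, hx.1⟩), hx.2⟩
        exact le_trans (hint S hS T hT) (Finset.card_le_card hsub)
    have hint1 : Intersecting F1 t := by
      intro A hA B hB
      rw [hF1, Finset.mem_image] at hA hB
      obtain ⟨S, hS, rfl⟩ := hA
      obtain ⟨T, hT, rfl⟩ := hB
      by_cases cS : j ∈ S ∧ i ∉ S ∧ insert i (S.erase j) ∉ F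
      · by_cases cT : j ∈ T ∧ i ∉ T ∧ insert i (T.erase j) ∉ F
        · -- both moved
          rw [hσ_moved S cS, hσ_moved T cT]
          have heq : insert i (S.erase j) ∩ insert i (T.erase j)
              = insert i ((S ∩ T).erase j) := by
            ext x
            simp only [Finset.mem_inter, Finset.mem_insert, Finset.mem_erase]
            tauto
          have hine : i ∉ (S ∩ T).erase j := fun h =>
            cS.2.1 (Finset.mem_inter.mp (Finset.mem_of_mem_erase h)).1
          have hjm : j ∈ S ∩ T := Finset.mem_inter.mpr ⟨cS.1, cT.1⟩
          rw [heq, Finset.card_insert_of_notMem hine, Finset.card_erase_of_mem hjm]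
          have h2 := hint S hS T hT
          have h3 : 1 ≤ (S ∩ T).card := Finset.card_pos.mpr ⟨j, hjm⟩
          omega
        · exact mixed S hS T hT cS cT
      · by_cases cT : j ∈ T ∧ i ∉ T ∧ insert i (T.erase j) ∉ F
        · rw [Finset.inter_comm]
          exact mixed T hT S hS cT cS
        · rw [hσ_not S cS, hσ_not T cT]
          exact hint S hS T hT
    have hrange1 : ∀ S ∈ F1, S ⊆ Finset.range n := by
      intro A hA
      rw [hF1, Finset.mem_image] at hA
      obtain ⟨S, hS, rfl⟩ := hA
      by_cases cS : j ∈ S ∧ i ∉ S ∧ insert i (S.erase j) ∉ F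
      · rw [hσ_moved S cS]
        intro x hx
        rw [Finset.mem_insert] at hx
        rcases hx with rfl | hx
        · have : j ∈ Finset.range n := hrange S hS cS.1
          rw [Finset.mem_range] at *
          omega
        · exact hrange S hS (Finset.mem_of_mem_erase hx)
      · rw [hσ_not S cS]
        exact hrange S hS
    have hw1 : ∀ w : ℕ → ℕ, ∑ S ∈ F1, w S.card = ∑ S ∈ F, w S.card := by
      intro w
      rw [hF1, Finset.sum_image (fun u hu v hv h => hinj hu hv h)]
      exact Finset.sum_congr rfl (fun S _ => by rw [hcard_pres S])
    have hpot : ∑ S ∈ F1, S.sum id < ∑ S ∈ F, S.sum id := by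
      rw [hF1, Finset.sum_image (fun u hu v hv h => hinj hu hv h)]
      apply Finset.sum_lt_sum
      · intro S hS
        by_cases cS : j ∈ S ∧ i ∉ S ∧ insert i (S.erase j) ∉ F
        · rw [hσ_moved S cS, Finset.sum_insert
            (fun h => cS.2.1 (Finset.mem_of_mem_erase h))]
          have h1 := Finset.sum_erase_add S id cS.1
          simp only [id] at *
          omega
        · rw [hσ_not S cS]
      · refine ⟨S₀, hS₀, ?_⟩
        have cS₀ : j ∈ S₀ ∧ i ∉ S₀ ∧ insert i (S₀.erase j) ∉ F := ⟨hjS₀, hiS₀, hS₀'⟩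
        rw [hσ_moved S₀ cS₀, Finset.sum_insert
          (fun h => hiS₀ (Finset.mem_of_mem_erase h))]
        have h1 := Finset.sum_erase_add S₀ id hjS₀
        simp only [id] at *
        omega
    have hsum1 : ∑ S ∈ F1, S.sum id < N := by omega
    obtain ⟨F', h1, h2, h3, h4⟩ := ih (∑ S ∈ F1, S.sum id) hsum1 F1 (le_refl _) hint1 hrange1
    exact ⟨F', h1, h2, h3, fun w => (h4 w).trans (hw1 w)⟩




variable {n q : ℕ}

def agree (x y : Fin n → Fin q) : ℕ := (Finset.univ.filter fun i => x i = y i).card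

lemma agree_comm (x y : Fin n → Fin q) : agree x y = agree y x := by
  rw [agree, agree]
  congr 1
  apply Finset.filter_congr
  intro j _
  constructor
  · exact fun h => h.symm
  · exact fun h => h.symm

lemma filter_univ_split (p : Fin n → Prop) [DecidablePred p] (i : Fin n) :
    (Finset.univ.filter p).card = ((Finset.univ.erase i).filter p).card
      + if p i then 1 else 0 := by
  by_cases h : p i
  · rw [if_pos h]
    have heq : Finset.univ.filter p = insert i ((Finset.univ.erase i).filter p) := by
      ext j
      simp only [Finset.mem_filter, Finset.mem_insert, Finset.mem_erase, Finset.mem_univ,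
        true_and]
      by_cases hji : j = i
      · subst hji; tauto
      · tauto
    rw [heq, Finset.card_insert_of_notMem (by simp)]
  · rw [if_neg h, add_zero]
    congr 1
    ext j
    simp only [Finset.mem_filter, Finset.mem_erase, Finset.mem_univ, true_and]
    by_cases hji : j = i
    · subst hji; tauto
    · tauto

lemma agree_split (x y : Fin n → Fin q) (i : Fin n) :
    agree x y = ((Finset.univ.erase i).filter fun j => x j = y j).card
      + if x i = y i then 1 else 0 :=
  filter_univ_split (fun j => x j = y j) i

lemma agree_update_update (x y : Fin n → Fin q) (i : Fin n) (v w : Fin q) :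
    agree (Function.update x i v) (Function.update y i w)
      = ((Finset.univ.erase i).filter fun j => x j = y j).card + if v = w then 1 else 0 := by
  rw [agree_split _ _ i, Function.update_self, Function.update_self]
  congr 2
  apply Finset.filter_congr
  intro j hj
  rw [Finset.mem_erase] at hj
  rw [Function.update_of_ne hj.1, Function.update_of_ne hj.1]

lemma agree_update_left (x y : Fin n → Fin q) (i : Fin n) (v : Fin q) :
    agree (Function.update x i v) y
      = ((Finset.univ.erase i).filter fun j => x j = y j).card + if v = y i then 1 else 0 := by
  have := agree_update_update x y i v (y i)
  rwa [Function.update_eq_self] at this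

lemma agree_eq (x y : Fin n → Fin q) (i : Fin n) :
    agree x y = ((Finset.univ.erase i).filter fun j => x j = y j).card
      + if x i = y i then 1 else 0 := agree_split x y i

lemma exists_zero_closed (t : ℕ) (z : Fin q) :
    ∀ N (C : Finset (Fin n → Fin q)),
      (∑ x ∈ C, (Finset.univ.filter fun i => x i ≠ z).card) ≤ N →
      (∀ x ∈ C, ∀ y ∈ C, x ≠ y → t ≤ agree x y) →
      ∃ D : Finset (Fin n → Fin q), D.card = C.card ∧
        (∀ x ∈ D, ∀ y ∈ D, x ≠ y → t ≤ agree x y) ∧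
        (∀ x ∈ D, ∀ i, Function.update x i z ∈ D) := by
  intro N
  induction N using Nat.strong_induction_on with
  | _ N ih =>
  intro C hsum hC
  by_cases hzc : ∀ x ∈ C, ∀ i, Function.update x i z ∈ C
  · exact ⟨C, rfl, hC, hzc⟩
  · push_neg at hzc
    obtain ⟨x₀, hx₀, i₀, hx₀'⟩ := hzc
    set a := x₀ i₀ with ha
    have haz : a ≠ z := by
      intro h
      apply hx₀'
      rw [← h, ha, Function.update_eq_self]
      exact hx₀
    set σ : (Fin n → Fin q) → (Fin n → Fin q) :=
      fun x => if x i₀ = a ∧ Function.update x i₀ z ∉ C then Function.update x i₀ z else x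
      with hσ
    have hσ_moved : ∀ x, (x i₀ = a ∧ Function.update x i₀ z ∉ C) →
        σ x = Function.update x i₀ z := by
      intro x h; rw [hσ]; simp only [if_pos h]
    have hσ_not : ∀ x, ¬(x i₀ = a ∧ Function.update x i₀ z ∉ C) → σ x = x := by
      intro x h; rw [hσ]; simp only [if_neg h]
    have hinj : Set.InjOn σ C := by
      intro u hu v hv huv
      by_cases cu : u i₀ = a ∧ Function.update u i₀ z ∉ C
      · by_cases cv : v i₀ = a ∧ Function.update v i₀ z ∉ C
        · rw [hσ_moved u cu, hσ_moved v cv] at huv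
          funext j
          by_cases hj : j = i₀
          · subst hj; rw [cu.1, cv.1]
          · have := congrFun huv j
            rwa [Function.update_of_ne hj, Function.update_of_ne hj] at this
        · rw [hσ_moved u cu, hσ_not v cv] at huv
          exact absurd (huv ▸ hv) cu.2
      · by_cases cv : v i₀ = a ∧ Function.update v i₀ z ∉ C
        · rw [hσ_not u cu, hσ_moved v cv] at huv
          exact absurd (huv.symm ▸ hu) cv.2
        · rw [hσ_not u cu, hσ_not v cv] at huv
          exact huv
    set C1 := C.image σ with hC1
    have hcard1 : C1.card = C.card := Finset.card_image_of_injOn hinj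
    -- agreement is preserved
    have mixed : ∀ x ∈ C, ∀ y ∈ C, x ≠ y → (x i₀ = a ∧ Function.update x i₀ z ∉ C) →
        ¬(y i₀ = a ∧ Function.update y i₀ z ∉ C) → t ≤ agree (σ x) (σ y) := by
      intro x hx y hy hxy cx cy
      rw [hσ_moved x cx, hσ_not y cy, agree_update_left x y i₀ z]
      by_cases hyi : y i₀ = a
      · have hw : Function.update y i₀ z ∈ C := by
          by_contra h
          exact cy ⟨hyi, h⟩
        have hxw : x ≠ Function.update y i₀ z := by
          intro h
          have hxz : x i₀ = z := by rw [h, Function.update_self]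
          rw [cx.1] at hxz
          exact haz hxz
        have h1 := hC x hx _ hw hxw
        have h2 : agree x (Function.update y i₀ z)
            = ((Finset.univ.erase i₀).filter fun j => x j = y j).card := by
          have h3 := agree_update_update x y i₀ (x i₀) z
          rw [Function.update_eq_self] at h3
          rw [h3, cx.1, if_neg haz, add_zero]
        rw [h2] at h1
        have hza : ¬ (z = y i₀) := by rw [hyi]; exact fun h => haz h.symm
        rw [if_neg hza, add_zero]
        exact h1
      · have h1 := hC x hx y hy hxy
        have h2 : ¬ (x i₀ = y i₀) := by rw [cx.1]; exact fun h => hyi h.symm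
        rw [agree_eq x y i₀, if_neg h2, add_zero] at h1
        exact le_trans h1 (Nat.le_add_right _ _)
    have hC1agree : ∀ x' ∈ C1, ∀ y' ∈ C1, x' ≠ y' → t ≤ agree x' y' := by
      intro x' hx' y' hy' hne
      rw [hC1, Finset.mem_image] at hx' hy'
      obtain ⟨x, hx, rfl⟩ := hx'
      obtain ⟨y, hy, rfl⟩ := hy'
      have hxy : x ≠ y := fun h => hne (h ▸ rfl)
      by_cases cx : x i₀ = a ∧ Function.update x i₀ z ∉ C
      · by_cases cy : y i₀ = a ∧ Function.update y i₀ z ∉ C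
        · rw [hσ_moved x cx, hσ_moved y cy, agree_update_update x y i₀ z z, if_pos rfl]
          have h1 := hC x hx y hy hxy
          have h2 : x i₀ = y i₀ := by rw [cx.1, cy.1]
          rw [agree_eq x y i₀, if_pos h2] at h1
          exact h1
        · exact mixed x hx y hy hxy cx cy
      · by_cases cy : y i₀ = a ∧ Function.update y i₀ z ∉ C
        · rw [agree_comm]
          exact mixed y hy x hx (fun h => hxy h.symm) cy cx
        · rw [hσ_not x cx, hσ_not y cy]
          exact hC x hx y hy hxy
    -- potential decreases
    have hφ : ∀ x : Fin n → Fin q, x i₀ = a →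
        (Finset.univ.filter fun i => Function.update x i₀ z i ≠ z).card
          < (Finset.univ.filter fun i => x i ≠ z).card := by
      intro x hxa
      have heq : (Finset.univ.filter fun i => Function.update x i₀ z i ≠ z)
          = (Finset.univ.filter fun i => x i ≠ z).erase i₀ := by
        ext j
        simp only [Finset.mem_filter, Finset.mem_erase, Finset.mem_univ, true_and]
        by_cases hji : j = i₀
        · subst hji
          simp [Function.update_self]
        · simp [Function.update_of_ne hji, hji]
      have hi₀ : i₀ ∈ (Finset.univ.filter fun i => x i ≠ z) := by
        rw [Finset.mem_filter]
        exact ⟨Finset.mem_univ _, by rw [hxa]; exact haz⟩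
      rw [heq, Finset.card_erase_of_mem hi₀]
      have hpos : 0 < (Finset.univ.filter fun i => x i ≠ z).card :=
        Finset.card_pos.mpr ⟨i₀, hi₀⟩
      exact Nat.sub_lt hpos one_pos
    have hφle : ∀ x, (Finset.univ.filter fun i => σ x i ≠ z).card
        ≤ (Finset.univ.filter fun i => x i ≠ z).card := by
      intro x
      by_cases cx : x i₀ = a ∧ Function.update x i₀ z ∉ C
      · rw [hσ_moved x cx]
        exact le_of_lt (hφ x cx.1)
      · rw [hσ_not x cx]
    have hpot : ∑ x ∈ C1, (Finset.univ.filter fun i => x i ≠ z).card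
        < ∑ x ∈ C, (Finset.univ.filter fun i => x i ≠ z).card := by
      rw [hC1, Finset.sum_image (fun u hu v hv h => hinj hu hv h)]
      apply Finset.sum_lt_sum
      · exact fun x _ => hφle x
      · refine ⟨x₀, hx₀, ?_⟩
        rw [hσ_moved x₀ ⟨ha.symm, hx₀'⟩]
        exact hφ x₀ ha.symm
    obtain ⟨D, h1, h2, h3⟩ := ih (∑ x ∈ C1, (Finset.univ.filter fun i => x i ≠ z).card)
      (lt_of_lt_of_le hpot hsum) C1 (le_refl _) hC1agree
    exact ⟨D, h1.trans hcard1, h2, h3⟩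




def zsetF (z : Fin q) (x : Fin n → Fin q) : Finset (Fin n) := Finset.univ.filter fun i => x i = z

def finEmb : Fin n ↪ ℕ := ⟨Fin.val, Fin.val_injective⟩

def zsetN (z : Fin q) (x : Fin n → Fin q) : Finset ℕ := (zsetF z x).map finEmb

lemma zsetN_card (z : Fin q) (x : Fin n → Fin q) : (zsetN z x).card = (zsetF z x).card :=
  Finset.card_map _

lemma zsetN_subset (z : Fin q) (x : Fin n → Fin q) : zsetN z x ⊆ Finset.range n := by
  intro m hm
  rw [zsetN, Finset.mem_map] at hm
  obtain ⟨i, _, rfl⟩ := hm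
  rw [Finset.mem_range]
  exact i.isLt

lemma zsetN_inter_card (z : Fin q) (x y : Fin n → Fin q) :
    (zsetN z x ∩ zsetN z y).card = (zsetF z x ∩ zsetF z y).card := by
  rw [zsetN, zsetN, ← Finset.map_inter]
  exact Finset.card_map _

lemma zsetN_inj (z : Fin q) (x y : Fin n → Fin q) (h : zsetN z x = zsetN z y) :
    zsetF z x = zsetF z y := Finset.map_injective finEmb h

lemma zeroOn_mem (z : Fin q) (D : Finset (Fin n → Fin q))
    (hcl : ∀ x ∈ D, ∀ i, Function.update x i z ∈ D) (x : Fin n → Fin q) (hx : x ∈ D) :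
    ∀ A : Finset (Fin n), (fun i => if i ∈ A then z else x i) ∈ D := by
  intro A
  induction A using Finset.induction_on with
  | empty =>
    have : (fun i => if i ∈ (∅ : Finset (Fin n)) then z else x i) = x := by
      funext i; simp
    rwa [this]
  | @insert a A ha ih =>
    have : (fun i => if i ∈ insert a A then z else x i)
        = Function.update (fun i => if i ∈ A then z else x i) a z := by
      funext i
      by_cases hia : i = a
      · subst hia
        rw [Function.update_self, if_pos (Finset.mem_insert_self _ _)]
      · rw [Function.update_of_ne hia]
        by_cases hiA : i ∈ A
        · rw [if_pos hiA, if_pos (Finset.mem_insert_of_mem hiA)]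
        · rw [if_neg hiA, if_neg (by rw [Finset.mem_insert]; tauto)]
    rw [this]
    exact hcl _ ih a

lemma zero_fn_mem (z : Fin q) (D : Finset (Fin n → Fin q))
    (hcl : ∀ x ∈ D, ∀ i, Function.update x i z ∈ D) (x : Fin n → Fin q) (hx : x ∈ D) :
    (fun _ : Fin n => z) ∈ D := by
  have := zeroOn_mem z D hcl x hx Finset.univ
  have heq : (fun i => if i ∈ (Finset.univ : Finset (Fin n)) then z else x i)
      = (fun _ : Fin n => z) := by
    funext i; rw [if_pos (Finset.mem_univ i)]
  rwa [heq] at this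

lemma member_zset_card (t : ℕ) (htn : t ≤ n) (z : Fin q) (D : Finset (Fin n → Fin q))
    (hag : ∀ x ∈ D, ∀ y ∈ D, x ≠ y → t ≤ agree x y)
    (hcl : ∀ x ∈ D, ∀ i, Function.update x i z ∈ D)
    (y : Fin n → Fin q) (hy : y ∈ D) : t ≤ (zsetF z y).card := by
  by_cases hzf : y = (fun _ : Fin n => z)
  · have : zsetF z y = Finset.univ := by
      rw [zsetF, Finset.filter_true_of_mem]
      intro i _
      rw [hzf]
    rw [this, Finset.card_univ, Fintype.card_fin]
    exact htn
  · have hzm := zero_fn_mem z D hcl y hy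
    have h1 := hag y hy _ hzm hzf
    have : agree y (fun _ : Fin n => z) = (zsetF z y).card := rfl
    rwa [this] at h1

lemma zset_intersecting (t : ℕ) (htn : t ≤ n) (z : Fin q) (D : Finset (Fin n → Fin q))
    (hag : ∀ x ∈ D, ∀ y ∈ D, x ≠ y → t ≤ agree x y)
    (hcl : ∀ x ∈ D, ∀ i, Function.update x i z ∈ D) :
    ∀ x ∈ D, ∀ y ∈ D, t ≤ (zsetF z x ∩ zsetF z y).card := by
  intro x hx y hy
  by_cases hxy : x = y
  · subst hxy
    rw [Finset.inter_self]
    exact member_zset_card t htn z D hag hcl x hx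
  · set A := Finset.univ.filter (fun i => ¬ x i = z) with hA
    set y' : Fin n → Fin q := fun i => if i ∈ A then z else y i with hy'
    have hy'D : y' ∈ D := zeroOn_mem z D hcl y hy A
    have hagr : agree x y' = (zsetF z x ∩ zsetF z y).card := by
      rw [agree]
      congr 1
      ext i
      simp only [Finset.mem_filter, Finset.mem_inter, zsetF, Finset.mem_univ, true_and, hy', hA]
      by_cases hxi : x i = z
      · rw [if_neg (by simp [hxi])]
        constructor
        · intro h; exact ⟨hxi, by rw [← h, hxi]⟩
        · intro h; rw [hxi, h.2]
      · rw [if_pos (by simp [hxi])]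
        constructor
        · intro h; exact absurd h hxi
        · intro h; exact absurd h.1 hxi
    by_cases hxy' : x = y'
    · -- x must be the zero function
      have hxz : ∀ i, x i = z := by
        intro i
        by_contra hxi
        have hiA : i ∈ A := by rw [hA, Finset.mem_filter]; exact ⟨Finset.mem_univ _, hxi⟩
        have : x i = z := by
          rw [hxy', hy']
          simp only [if_pos hiA]
        exact hxi this
      have hx_univ : zsetF z x = Finset.univ := by
        rw [zsetF, Finset.filter_true_of_mem (fun i _ => hxz i)]
      rw [hx_univ, Finset.univ_inter]
      exact member_zset_card t htn z D hag hcl y hy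
    · have := hag x hx y' hy'D hxy'
      rwa [hagr] at this

lemma fiber_card_le (hq : 2 ≤ q) (z : Fin q) (hzv : z.val = 0)
    (D : Finset (Fin n → Fin q)) (Z : Finset (Fin n)) :
    (D.filter (fun x => zsetF z x = Z)).card ≤ (q-1)^(n - Z.card) := by
  have hq1 : 1 ≤ q - 1 := by omega
  set z0 : Fin (q-1) := ⟨0, by omega⟩ with hz0
  set B := Fintype.piFinset (fun i : Fin n =>
    if i ∈ Z then ({z0} : Finset (Fin (q-1))) else Finset.univ) with hB
  have hBcard : B.card = (q-1)^(n - Z.card) := by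
    rw [hB, Fintype.card_piFinset]
    have h1 : ∀ i : Fin n,
        ((if i ∈ Z then ({z0} : Finset (Fin (q-1))) else Finset.univ)).card
          = if i ∈ Z then 1 else (q-1) := by
      intro i
      by_cases h : i ∈ Z
      · rw [if_pos h, if_pos h, Finset.card_singleton]
      · rw [if_neg h, if_neg h, Finset.card_univ, Fintype.card_fin]
    rw [Finset.prod_congr rfl (fun i _ => h1 i), Finset.prod_ite, Finset.prod_const,
      Finset.prod_const, one_pow, one_mul]
    congr 1
    have h2 := Finset.card_filter_add_card_filter_not
      (s := (Finset.univ : Finset (Fin n))) (p := fun i => i ∈ Z)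
    rw [Finset.filter_univ_mem] at h2
    rw [Finset.card_univ, Fintype.card_fin] at h2
    omega
  rw [← hBcard]
  apply Finset.card_le_card_of_injOn (fun x => fun i =>
    if h : (x i).val = 0 then z0 else ⟨(x i).val - 1, by have := (x i).isLt; omega⟩)
  · -- maps into B
    intro x hx
    rw [Finset.mem_coe, Finset.mem_filter] at hx
    rw [Finset.mem_coe, hB, Fintype.mem_piFinset]
    intro i
    by_cases hiZ : i ∈ Z
    · rw [if_pos hiZ, Finset.mem_singleton]
      have hxi : x i = z := by
        have : i ∈ zsetF z x := by rw [hx.2]; exact hiZ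
        rw [zsetF, Finset.mem_filter] at this
        exact this.2
      beta_reduce
      rw [dif_pos (show (x i).val = 0 by rw [hxi, hzv])]
    · rw [if_neg hiZ]
      exact Finset.mem_univ _
  · -- injective on the fiber
    intro x hx x' hx' heq
    rw [Finset.coe_filter, Set.mem_setOf_eq] at hx hx'
    funext i
    have hi := congrFun heq i
    by_cases hiZ : i ∈ Z
    · have h1 : x i = z := by
        have : i ∈ zsetF z x := by rw [hx.2]; exact hiZ
        rw [zsetF, Finset.mem_filter] at this
        exact this.2
      have h2 : x' i = z := by
        have : i ∈ zsetF z x' := by rw [hx'.2]; exact hiZ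
        rw [zsetF, Finset.mem_filter] at this
        exact this.2
      rw [h1, h2]
    · have h1 : ¬ (x i).val = 0 := by
        intro h
        apply hiZ
        have : x i = z := by
          apply Fin.ext
          rw [h, hzv]
        rw [← hx.2, zsetF, Finset.mem_filter]
        exact ⟨Finset.mem_univ _, this⟩
      have h2 : ¬ (x' i).val = 0 := by
        intro h
        apply hiZ
        have : x' i = z := by
          apply Fin.ext
          rw [h, hzv]
        rw [← hx'.2, zsetF, Finset.mem_filter]
        exact ⟨Finset.mem_univ _, this⟩
      simp only [] at hi
      rw [dif_neg h1, dif_neg h2] at hi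
      have := congrArg Fin.val hi
      simp only at this
      apply Fin.ext
      have l1 := (x i).isLt
      have l2 := (x' i).isLt
      omega

lemma card_le_weight (hq : 2 ≤ q) (z : Fin q) (hzv : z.val = 0)
    (D : Finset (Fin n → Fin q)) :
    D.card ≤ ∑ S ∈ D.image (zsetN z), (q-1)^(n - S.card) := by
  rw [Finset.card_eq_sum_card_fiberwise
    (f := zsetN z) (t := D.image (zsetN z)) (fun x hx => Finset.mem_image_of_mem _ hx)]
  apply Finset.sum_le_sum
  intro S hS
  rw [Finset.mem_image] at hS
  obtain ⟨x₀, hx₀, rfl⟩ := hS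
  have hfib : D.filter (fun x => zsetN z x = zsetN z x₀)
      = D.filter (fun x => zsetF z x = zsetF z x₀) := by
    apply Finset.filter_congr
    intro x _
    constructor
    · exact fun h => zsetN_inj z x x₀ h
    · intro h; rw [zsetN, h, zsetN]
  rw [hfib, zsetN_card]
  exact fiber_card_le hq z hzv D (zsetF z x₀)


theorem main_count {q n : ℕ} (t : ℕ) (hq : 3 ≤ q) (ht : 1 ≤ t) (htn : t ≤ n)
    (C : Finset (Fin n → Fin q))
    (hC : ∀ x ∈ C, ∀ y ∈ C, x ≠ y → t ≤ agree x y) :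
    C.card * (q-1)^t ≤ q^n := by
  have hq0 : 0 < q := by omega
  set z : Fin q := ⟨0, hq0⟩ with hz
  obtain ⟨D, hDcard, hDag, hDcl⟩ := exists_zero_closed t z
    (∑ x ∈ C, (Finset.univ.filter fun i => x i ≠ z).card) C (le_refl _) hC
  set F := D.image (zsetN z) with hF
  have hFsub : ∀ S ∈ F, S ⊆ Finset.range n := by
    intro S hS
    rw [hF, Finset.mem_image] at hS
    obtain ⟨x, _, rfl⟩ := hS
    exact zsetN_subset z x
  have hFint : Intersecting F t := by
    intro S hS T hT
    rw [hF, Finset.mem_image] at hS hT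
    obtain ⟨x, hx, rfl⟩ := hS
    obtain ⟨y, hy, rfl⟩ := hT
    rw [zsetN_inter_card]
    exact zset_intersecting t htn z D hDag hDcl x hx y hy
  have hDW : D.card ≤ ∑ S ∈ F, (q-1)^(n - S.card) := card_le_weight (by omega) z rfl D
  obtain ⟨F', hint', hsub', hred', hw'⟩ :=
    exists_reduced t n (∑ S ∈ F, S.sum id) F (le_refl _) hFint hFsub
  have hball : ∀ S ∈ F', P S 0 t := by
    intro S hS
    by_contra hfail
    have hkS : t ≤ S.card := by
      have := hint' S hS S hS
      rwa [Finset.inter_self] at this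
    obtain ⟨T, hT1, hT2, hT3⟩ := ballot_construct S n t ht (hsub' S hS) hkS hfail
    have hTF : T ∈ F' := dominated_mem F' hred' (S.sum id) S T (le_refl _) hS hT1 hT3
    have := hint' S hS T hTF
    omega
  have hFW : ∑ S ∈ F', (fun c => (q-1)^(n - c)) S.card
      = ∑ S ∈ F, (fun c => (q-1)^(n - c)) S.card := hw' (fun c => (q-1)^(n - c))
  simp only [] at hFW
  have hsub2 : F' ⊆ (Finset.range n).powerset.filter (fun S => P S 0 t) := by
    intro S hS
    rw [Finset.mem_filter, Finset.mem_powerset]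
    exact ⟨hsub' S hS, hball S hS⟩
  have hmono : ∑ S ∈ F', (q-1)^(n - S.card)
      ≤ ∑ S ∈ (Finset.range n).powerset.filter (fun S => P S 0 t), (q-1)^(n - S.card) :=
    Finset.sum_le_sum_of_subset hsub2
  have hwalk := walk_bound q (by omega) n 0 t
  simp only [Nat.zero_add, ← Finset.range_eq_Ico] at hwalk
  calc C.card * (q-1)^t = D.card * (q-1)^t := by rw [hDcard]
    _ ≤ (∑ S ∈ F, (q-1)^(n - S.card)) * (q-1)^t := Nat.mul_le_mul_right _ hDW
    _ = (∑ S ∈ F', (q-1)^(n - S.card)) * (q-1)^t := by rw [hFW]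
    _ ≤ (∑ S ∈ (Finset.range n).powerset.filter (fun S => P S 0 t), (q-1)^(n - S.card))
          * (q-1)^t := Nat.mul_le_mul_right _ hmono
    _ = (q-1)^t * ∑ S ∈ (Finset.range n).powerset.filter (fun S => P S 0 t),
          (q-1)^(n - S.card) := by ring
    _ ≤ q^n := hwalk

end SDC

theorem small_diameter_code (ε : ℝ) (hε : 0 < ε) (hε1 : ε < 1 / 3)
    (q n : ℕ) (hq : 3 ≤ q)
    (C : Finset (Fin n → Fin q))
    (hdiam : ∀ x ∈ C, ∀ y ∈ C, x ≠ y → (hammingDist x y : ℝ) ≤ (1 - ε) * n) :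
    (C.card : ℝ) ≤ (q : ℝ) ^ ((1 - ε / 125) * n) := by
  rcases Nat.eq_zero_or_pos n with rfl | hn
  · have hcard : C.card ≤ 1 :=
      Finset.card_le_one.mpr (fun a _ b _ => funext fun i => i.elim0)
    calc (C.card : ℝ) ≤ 1 := by exact_mod_cast hcard
      _ = (q : ℝ) ^ ((1 - ε / 125) * (0:ℕ)) := by
          rw [Nat.cast_zero, mul_zero, Real.rpow_zero]
  · have hnR : (0:ℝ) < n := by exact_mod_cast hn
    set t := ⌈ε * n⌉₊ with htdef
    have htpos : 0 < t := by
      rw [htdef]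
      apply Nat.ceil_pos.mpr
      positivity
    have htn : t ≤ n := by
      rw [htdef, Nat.ceil_le]
      nlinarith
    have hagree : ∀ x ∈ C, ∀ y ∈ C, x ≠ y → t ≤ SDC.agree x y := by
      intro x hx y hy hxy
      have hd := hdiam x hx y hy hxy
      have hsplit : SDC.agree x y + hammingDist x y = n := by
        have h1 := Finset.card_filter_add_card_filter_not
          (s := (Finset.univ : Finset (Fin n))) (p := fun i => x i = y i)
        rw [Finset.card_univ, Fintype.card_fin] at h1
        have h2 : hammingDist x y = (Finset.univ.filter (fun i => ¬ (fun i => x i = y i) i)).card := by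
          rfl
        rw [SDC.agree, h2]
        exact h1
      rw [htdef, Nat.ceil_le]
      have hsR : (SDC.agree x y : ℝ) + (hammingDist x y : ℝ) = n := by exact_mod_cast hsplit
      nlinarith
    have hmain := SDC.main_count t hq htpos htn C hagree
    have hq1R : (1:ℝ) ≤ (q:ℝ) := by exact_mod_cast (by omega : 1 ≤ q)
    have hqposR : (0:ℝ) < (q:ℝ) := by linarith
    set Q : ℝ := ((q-1 : ℕ) : ℝ) with hQ
    have hQ2 : (2:ℝ) ≤ Q := by
      rw [hQ]; exact_mod_cast (by omega : 2 ≤ q - 1)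
    have hQpos : (0:ℝ) < Q := by linarith
    have hcast : (C.card : ℝ) * Q^t ≤ (q:ℝ)^(n:ℕ) := by
      rw [hQ]
      exact_mod_cast hmain
    have hkey : (q:ℝ) ^ ((ε/125) * n) ≤ Q^t := by
      have h1 : (q:ℝ) ^ ((ε/125) * n) ≤ (q:ℝ) ^ ((t:ℝ)/125) := by
        apply Real.rpow_le_rpow_of_exponent_le hq1R
        have hceil := Nat.le_ceil (ε * (n:ℝ))
        rw [← htdef] at hceil
        linarith
      have h2 : (q:ℝ) ≤ Q^(125:ℕ) := by
        have ha : q ≤ (q-1)^2 := by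
          rcases Nat.exists_eq_add_of_le (show 3 ≤ q from hq) with ⟨m, rfl⟩
          have hm : 3 + m - 1 = m + 2 := by omega
          rw [hm]
          nlinarith
        have hb : (q-1)^2 ≤ (q-1)^(125:ℕ) := Nat.pow_le_pow_right (by omega) (by omega)
        rw [hQ]
        exact_mod_cast le_trans ha hb
      have h3 : (q:ℝ) ^ ((t:ℝ)/125) ≤ (Q^(125:ℕ)) ^ ((t:ℝ)/125) :=
        Real.rpow_le_rpow (le_of_lt hqposR) h2 (by positivity)
      have h4 : ((Q^(125:ℕ) : ℝ)) ^ ((t:ℝ)/125) = Q ^ (t:ℕ) := by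
        rw [← Real.rpow_natCast Q 125, ← Real.rpow_mul (le_of_lt hQpos),
          ← Real.rpow_natCast Q t]
        congr 1
        push_cast
        ring
      rw [h4] at h3
      linarith
    have hsplitpow : (q:ℝ)^(n:ℕ) = (q:ℝ) ^ ((1 - ε/125)*n) * (q:ℝ) ^ ((ε/125)*n) := by
      rw [← Real.rpow_natCast (q:ℝ) n, ← Real.rpow_add hqposR]
      congr 1
      ring
    have hQt_pos : (0:ℝ) < Q^t := by positivity
    have hfin : (C.card:ℝ) * Q^t ≤ ((q:ℝ) ^ ((1 - ε/125)*n)) * Q^t := by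
      calc (C.card:ℝ) * Q^t ≤ (q:ℝ)^(n:ℕ) := hcast
        _ = (q:ℝ) ^ ((1 - ε/125)*n) * (q:ℝ) ^ ((ε/125)*n) := hsplitpow
        _ ≤ ((q:ℝ) ^ ((1 - ε/125)*n)) * Q^t := by
            apply mul_le_mul_of_nonneg_left hkey
            positivity
    exact le_of_mul_le_mul_right hfin hQt_pos
end

section
/- For n even, let A₁ be the set of permutations of [n] mapping [n/2] to [n/2], and A₂ the set of permutations mapping [n/2] to [n/2 + 1, n]. Then |A₁| = |A₂| = ((n/2)!)², the Hamming distance between any π ∈ A₁ and ρ ∈ A₂ is exactly n, and ((n/2)!)² ≥ n!/3^n. -/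
open Finset

lemma perm_image_iff {n : ℕ} (π : Equiv.Perm (Fin n)) (S T : Finset (Fin n))
    (hcard : T.card ≤ S.card) (h : ∀ i ∈ S, π i ∈ T) :
    ∀ i, π i ∈ T ↔ i ∈ S := by
  have himg : S.image π = T := by
    apply Finset.eq_of_subset_of_card_le
    · intro x hx
      obtain ⟨i, hi, rfl⟩ := Finset.mem_image.mp hx
      exact h i hi
    · rwa [Finset.card_image_of_injective _ π.injective]
  intro i
  constructor
  · intro hi
    rw [← himg] at hi
    obtain ⟨j, hj, hji⟩ := Finset.mem_image.mp hi
    rwa [← π.injective hji]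
  · exact h i

theorem cross_version_fails (n : ℕ) (hn : Even n) (hpos : 0 < n) :
    let A₁ : Finset (Equiv.Perm (Fin n)) :=
      Finset.univ.filter (fun π => ∀ i : Fin n, (i : ℕ) < n / 2 → ((π i : ℕ) < n / 2))
    let A₂ : Finset (Equiv.Perm (Fin n)) :=
      Finset.univ.filter (fun π => ∀ i : Fin n, (i : ℕ) < n / 2 → (n / 2 ≤ (π i : ℕ)))
    A₁.card = ((n / 2).factorial) ^ 2 ∧
    A₂.card = ((n / 2).factorial) ^ 2 ∧
    (∀ π ∈ A₁, ∀ ρ ∈ A₂,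
      (Finset.univ.filter (fun i => π i ≠ ρ i)).card = n) ∧
    ((n.factorial : ℝ) / 3 ^ n ≤ (((n / 2).factorial : ℝ)) ^ 2) := by
  intro A₁ A₂
  haveI : NeZero n := ⟨by omega⟩
  set m := n / 2 with hm
  have hnm : n = m + m := by obtain ⟨k, rfl⟩ := hn; omega
  -- lower and upper halves
  set S : Finset (Fin n) := Finset.univ.filter (fun i => (i : ℕ) < m) with hSdef
  set T : Finset (Fin n) := Finset.univ.filter (fun i => m ≤ (i : ℕ)) with hTdef
  have hScard : S.card = m := by
    have : S = (Finset.range m).attachFin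
        (fun x hx => lt_of_lt_of_le (Finset.mem_range.mp hx) (by omega)) := by
      ext i
      simp [hSdef, Finset.mem_attachFin, Finset.mem_range]
    rw [this, Finset.card_attachFin, Finset.card_range]
  have hTcard : T.card = m := by
    have h1 : T = Finset.univ.filter (fun i : Fin n => ¬ ((i : ℕ) < m)) := by
      ext i; simp [hTdef, not_lt]
    have h2 := Finset.card_filter_add_card_filter_not
      (s := (Finset.univ : Finset (Fin n))) (p := fun i : Fin n => (i : ℕ) < m)
    rw [← hSdef, ← h1] at h2
    have : (Finset.univ : Finset (Fin n)).card = n := by simp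
    omega
  -- membership characterizations
  have key1 : ∀ π ∈ A₁, ∀ i : Fin n, ((π i : ℕ) < m ↔ (i : ℕ) < m) := by
    intro π hπ i
    rw [Finset.mem_filter] at hπ
    have := perm_image_iff π S S le_rfl (fun j hj => by
      simp only [hSdef, Finset.mem_filter, Finset.mem_univ, true_and] at hj ⊢
      exact hπ.2 j hj) i
    simpa [hSdef] using this
  have key2 : ∀ ρ ∈ A₂, ∀ i : Fin n, (m ≤ (ρ i : ℕ) ↔ (i : ℕ) < m) := by
    intro ρ hρ i
    rw [Finset.mem_filter] at hρ
    have := perm_image_iff ρ S T (by omega) (fun j hj => by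
      simp only [hSdef, hTdef, Finset.mem_filter, Finset.mem_univ, true_and] at hj ⊢
      exact hρ.2 j hj) i
    simpa [hSdef, hTdef] using this
  -- card of A₁
  have cardL : Fintype.card {x : Fin n // (x : ℕ) < m} = m := by
    rw [Fintype.card_subtype]; exact hScard
  have cardU : Fintype.card {x : Fin n // ¬ ((x : ℕ) < m)} = m := by
    rw [Fintype.card_subtype]
    have : Finset.univ.filter (fun i : Fin n => ¬ ((i : ℕ) < m)) = T := by
      ext i; simp [hTdef, not_lt]
    rw [this]; exact hTcard
  have hA1card : A₁.card = (m.factorial) ^ 2 := by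
    have := Finset.card_bij'
      (s := A₁)
      (t := (Finset.univ : Finset (Equiv.Perm {x : Fin n // (x : ℕ) < m} ×
        Equiv.Perm {x : Fin n // ¬ ((x : ℕ) < m)})))
      (fun π hπ => (π.subtypePerm (fun x => (key1 π hπ x)),
                    π.subtypePerm (fun x => not_congr (key1 π hπ x))))
      (fun pq _ => pq.1.subtypeCongr pq.2)
      (fun _ _ => Finset.mem_univ _)
      (fun pq _ => by
        refine Finset.mem_filter.mpr ⟨Finset.mem_univ _, ?_⟩
        intro i hi
        show (((pq.1.subtypeCongr pq.2)) i : ℕ) < m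
        rw [Equiv.Perm.subtypeCongr.left_apply (a := i) _ _ hi]
        exact (pq.1 ⟨i, hi⟩).2)
      (fun π hπ => by
        apply Equiv.ext
        intro x
        show ((π.subtypePerm (fun x => (key1 π hπ x))).subtypeCongr
          (π.subtypePerm (fun x => not_congr (key1 π hπ x)))) x = π x
        by_cases h : (x : ℕ) < m
        · rw [Equiv.Perm.subtypeCongr.left_apply (a := x) _ _ h]; rfl
        · rw [Equiv.Perm.subtypeCongr.right_apply (a := x) _ _ h]; rfl)
      (fun pq _ => by
        refine Prod.ext ?_ ?_
        · apply Equiv.ext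
          intro x
          apply Subtype.ext
          simp only [Equiv.Perm.subtypePerm_apply]
          rw [Equiv.Perm.subtypeCongr.left_apply (a := (x : Fin n)) _ _ x.2]
        · apply Equiv.ext
          intro x
          apply Subtype.ext
          simp only [Equiv.Perm.subtypePerm_apply]
          rw [Equiv.Perm.subtypeCongr.right_apply (a := (x : Fin n)) _ _ x.2])
    rw [this, Finset.card_univ, Fintype.card_prod, Fintype.card_perm, Fintype.card_perm,
      cardL, cardU, sq]
  -- the swap of halves
  have hmn : m < n := by omega
  set c : Fin n := ⟨m, hmn⟩ with hc
  set w : Equiv.Perm (Fin n) := Equiv.addLeft c with hwdef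
  have hw : ∀ i : Fin n, ((w i : ℕ) < m ↔ m ≤ (i : ℕ)) := by
    intro i
    have : (w i : ℕ) = (m + (i : ℕ)) % n := by
      simp [hwdef, hc, Fin.add_def]
    rw [this]
    rcases lt_or_ge (i : ℕ) m with h | h
    · rw [Nat.mod_eq_of_lt (by omega)]; omega
    · have hin : (i : ℕ) < n := i.2
      rw [Nat.mod_eq_sub_mod (by omega), Nat.mod_eq_of_lt (by omega)]
      omega
  have hww : ∀ x : Fin n, w (w x) = x := by
    intro x
    have hcc : c + c = 0 := by
      apply Fin.ext
      rw [Fin.add_def]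
      show ((m + m) % n) = (0 : Fin n).val
      rw [← hnm, Nat.mod_self, Fin.val_zero]
    simp only [hwdef, Equiv.coe_addLeft]
    rw [← add_assoc, hcc, zero_add]
  have hA2card : A₂.card = (m.factorial) ^ 2 := by
    rw [← hA1card]
    apply Finset.card_bij'
      (i := fun π (_ : π ∈ A₂) => π.trans w)
      (j := fun π (_ : π ∈ A₁) => π.trans w)
    · intro π hπ
      refine Finset.mem_filter.mpr ⟨Finset.mem_univ _, ?_⟩
      intro i hi
      show ((w (π i) : Fin n) : ℕ) < m
      exact (hw (π i)).mpr ((key2 π hπ i).mpr hi)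
    · intro π hπ
      refine Finset.mem_filter.mpr ⟨Finset.mem_univ _, ?_⟩
      intro i hi
      have h1 : (π i : ℕ) < m := (key1 π hπ i).mpr hi
      have := hw (π i)
      show m ≤ ((w (π i) : Fin n) : ℕ)
      omega
    · intro π _
      exact Equiv.ext fun x => hww (π x)
    · intro π _
      exact Equiv.ext fun x => hww (π x)
  refine ⟨hA1card, hA2card, ?_, ?_⟩
  · intro π hπ ρ hρ
    have : Finset.univ.filter (fun i : Fin n => π i ≠ ρ i) = Finset.univ := by
      ext i
      simp only [Finset.mem_filter, Finset.mem_univ, true_and, iff_true]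
      intro hcontra
      have h1 := key1 π hπ i
      have h2 := key2 ρ hρ i
      have : (π i : ℕ) = (ρ i : ℕ) := by rw [hcontra]
      rcases lt_or_ge (i : ℕ) m with h | h <;> omega
    rw [this, Finset.card_univ, Fintype.card_fin]
  · -- n! / 3^n ≤ (m!)^2
    have hfac : n.factorial = n.choose m * m.factorial * m.factorial := by
      have h := Nat.choose_mul_factorial_mul_factorial (show m ≤ n by omega)
      have hnm' : n - m = m := by omega
      rw [hnm'] at h
      exact h.symm
    have hchoose : n.choose m ≤ 2 ^ n := by
      rw [← Nat.sum_range_choose n]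
      exact Finset.single_le_sum (f := fun i => n.choose i) (fun _ _ => Nat.zero_le _)
        (Finset.mem_range.mpr (by omega))
    have hnat : n.factorial ≤ 3 ^ n * m.factorial ^ 2 := by
      calc n.factorial = n.choose m * m.factorial * m.factorial := hfac
        _ ≤ 2 ^ n * m.factorial * m.factorial := by
            exact Nat.mul_le_mul_right _ (Nat.mul_le_mul_right _ hchoose)
        _ ≤ 3 ^ n * m.factorial ^ 2 := by
            rw [sq, ← mul_assoc]
            exact Nat.mul_le_mul_right _
              (Nat.mul_le_mul_right _ (Nat.pow_le_pow_left (by norm_num) n))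
    rw [div_le_iff₀ (by positivity)]
    calc (n.factorial : ℝ) ≤ ((3 ^ n * m.factorial ^ 2 : ℕ) : ℝ) := by exact_mod_cast hnat
      _ = (m.factorial : ℝ) ^ 2 * 3 ^ n := by push_cast; ring
end

section
/- Let p be a prime, D ⊆ Z_p \ {0} with |D| = l, and let C ⊆ [q]^n be a code such that the Hamming distance between any two distinct words of C is congruent mod p to some element of D. Then |C| ≤ Σ_{i=0}^{l} C(n,i)(q-1)^i. -/
open Finset

section FranklAux

variable (p q n : ℕ) [NeZero q]

/-- Product of coordinate indicator functions. -/
def franklM (S : Finset (Fin n)) (a : Fin n → Fin q) : (Fin n → Fin q) → ZMod p :=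
  fun y => ∏ i ∈ S, (if y i = a i then 1 else 0)

/-- Span of indicator products of degree at most `k`. -/
def franklW (k : ℕ) : Submodule (ZMod p) ((Fin n → Fin q) → ZMod p) :=
  Submodule.span (ZMod p)
    {f | ∃ S : Finset (Fin n), ∃ a : Fin n → Fin q,
      S.card ≤ k ∧ (∀ i ∈ S, a i ≠ 0) ∧ f = franklM p q n S a}

lemma franklM_mem {k : ℕ} {S : Finset (Fin n)} {a : Fin n → Fin q}
    (hS : S.card ≤ k) (ha : ∀ i ∈ S, a i ≠ 0) :
    franklM p q n S a ∈ franklW p q n k :=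
  Submodule.subset_span ⟨S, a, hS, ha, rfl⟩

lemma franklM_insert {j : Fin n} {S : Finset (Fin n)} (hj : j ∉ S) (a : Fin n → Fin q)
    (c : Fin q) :
    franklM p q n (insert j S) (Function.update a j c)
      = fun y => (if y j = c then 1 else 0) * franklM p q n S a y := by
  funext y
  unfold franklM
  rw [Finset.prod_insert hj, Function.update_self]
  congr 1
  refine Finset.prod_congr rfl fun i hi => ?_
  rw [Function.update_of_ne (by rintro rfl; exact hj hi) _ _]

lemma franklInd (k : ℕ) (x : Fin n → Fin q) (j : Fin n) (S : Finset (Fin n)) (a : Fin n → Fin q)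
    (hS : S.card ≤ k) (ha : ∀ i ∈ S, a i ≠ 0) :
    (fun y => (if y j = x j then (1 : ZMod p) else 0) * franklM p q n S a y)
      ∈ franklW p q n (k + 1) := by
  by_cases hj : j ∈ S
  · by_cases hax : a j = x j
    · have h1 : (fun y => (if y j = x j then (1 : ZMod p) else 0) * franklM p q n S a y)
          = franklM p q n S a := by
        funext y
        unfold franklM
        rw [← Finset.mul_prod_erase _ _ hj, hax]
        by_cases h : y j = x j <;> simp [h]
      rw [h1]
      exact franklM_mem p q n (hS.trans (Nat.le_succ k)) ha
    · have h1 : (fun y => (if y j = x j then (1 : ZMod p) else 0) * franklM p q n S a y)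
          = (0 : (Fin n → Fin q) → ZMod p) := by
        funext y
        by_cases h : y j = x j
        · rw [if_pos h, one_mul]
          exact Finset.prod_eq_zero hj (by rw [if_neg (fun h2 => hax (h2.symm.trans h))])
        · rw [if_neg h, zero_mul]; rfl
      rw [h1]
      exact zero_mem _
  · by_cases hx : x j = 0
    · have key : (fun y => (if y j = x j then (1 : ZMod p) else 0) * franklM p q n S a y)
          = franklM p q n S a
            - ∑ c ∈ Finset.univ.erase (0 : Fin q),
                franklM p q n (insert j S) (Function.update a j c) := by
        funext y
        simp only [Pi.sub_apply, Finset.sum_apply]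
        have h2 : ∀ c, franklM p q n (insert j S) (Function.update a j c) y
            = (if y j = c then (1 : ZMod p) else 0) * franklM p q n S a y := by
          intro c; rw [franklM_insert p q n hj a c]
        simp only [h2]
        rw [← Finset.sum_mul]
        have h3 : ∑ c ∈ Finset.univ.erase (0 : Fin q), (if y j = c then (1 : ZMod p) else 0)
            = 1 - (if y j = 0 then (1 : ZMod p) else 0) := by
          have h4 : ∑ c : Fin q, (if y j = c then (1 : ZMod p) else 0) = 1 := by
            simp [Finset.sum_ite_eq]
          rw [← Finset.add_sum_erase _ _ (Finset.mem_univ (0 : Fin q))] at h4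
          linear_combination h4
        rw [h3, hx]
        ring
      rw [key]
      refine sub_mem (franklM_mem p q n (hS.trans (Nat.le_succ k)) ha)
        (Submodule.sum_mem _ fun c hc => franklM_mem p q n ?_ ?_)
      · rw [Finset.card_insert_of_notMem hj]; omega
      · intro i hi
        rcases Finset.mem_insert.mp hi with h | h
        · subst h; rw [Function.update_self]; exact Finset.ne_of_mem_erase hc
        · rw [Function.update_of_ne (by rintro rfl; exact hj h)]; exact ha i h
    · have h1 : (fun y => (if y j = x j then (1 : ZMod p) else 0) * franklM p q n S a y)
          = franklM p q n (insert j S) (Function.update a j (x j)) :=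
        (franklM_insert p q n hj a (x j)).symm
      rw [h1]
      refine franklM_mem p q n ?_ ?_
      · rw [Finset.card_insert_of_notMem hj]; omega
      · intro i hi
        rcases Finset.mem_insert.mp hi with h | h
        · subst h; rw [Function.update_self]; exact hx
        · rw [Function.update_of_ne (by rintro rfl; exact hj h)]; exact ha i h

lemma franklHamming (x y : Fin n → Fin q) :
    ((hammingDist x y : ℕ) : ZMod p)
      = (n : ZMod p) - ∑ j, (if y j = x j then (1 : ZMod p) else 0) := by
  have h2 : ((hammingDist x y : ℕ) : ZMod p)
      = ∑ j, (if y j = x j then (0 : ZMod p) else 1) := by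
    unfold hammingDist
    rw [Finset.card_filter]
    push_cast
    refine Finset.sum_congr rfl fun j _ => ?_
    by_cases h : y j = x j <;> simp [h, Ne.symm, eq_comm]
  rw [h2]
  have h3 : (n : ZMod p) = ∑ _j : Fin n, (1 : ZMod p) := by simp
  rw [h3, ← Finset.sum_sub_distrib]
  refine Finset.sum_congr rfl fun j _ => ?_
  by_cases h : y j = x j <;> simp [h]

lemma franklMulMem (k : ℕ) (x : Fin n → Fin q) (d : ZMod p)
    {f : (Fin n → Fin q) → ZMod p} (hf : f ∈ franklW p q n k) :
    (fun y => (((hammingDist x y : ℕ) : ZMod p) - d) * f y) ∈ franklW p q n (k + 1) := by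
  set h : (Fin n → Fin q) → ZMod p := fun y => ((hammingDist x y : ℕ) : ZMod p) - d with hh
  have hle : franklW p q n k
      ≤ Submodule.comap (LinearMap.mulLeft (ZMod p) h) (franklW p q n (k + 1)) := by
    rw [franklW, Submodule.span_le]
    rintro _ ⟨S, a, hS, ha, rfl⟩
    simp only [Set.mem_setOf_eq, SetLike.mem_coe, Submodule.mem_comap, LinearMap.mulLeft_apply]
    have key : h * franklM p q n S a
        = ((n : ZMod p) - d) • franklM p q n S a
          - ∑ j, (fun y => (if y j = x j then (1 : ZMod p) else 0) * franklM p q n S a y) := by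
      funext y
      simp only [Pi.mul_apply, Pi.sub_apply, Pi.smul_apply, Finset.sum_apply, smul_eq_mul, hh]
      rw [franklHamming p q n x y, ← Finset.sum_mul]
      ring
    rw [key]
    exact sub_mem (Submodule.smul_mem _ _ (franklM_mem p q n (hS.trans (Nat.le_succ k)) ha))
      (Submodule.sum_mem _ fun j _ => franklInd p q n k x j S a hS ha)
  exact hle hf

lemma franklProd (x : Fin n → Fin q) (E : Finset (ZMod p)) :
    (fun y => ∏ d ∈ E, (((hammingDist x y : ℕ) : ZMod p) - d)) ∈ franklW p q n E.card := by
  induction E using Finset.cons_induction with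
  | empty =>
    have h1 : (fun _ : Fin n → Fin q => (1 : ZMod p))
        = franklM p q n ∅ (fun _ => 0) := by
      funext y; simp [franklM]
    simp only [Finset.prod_empty, Finset.card_empty]
    rw [h1]
    exact franklM_mem p q n (by simp) (by simp)
  | cons d E hd ih =>
    rw [Finset.card_cons]
    have h1 : (fun y => ∏ e ∈ Finset.cons d E hd, (((hammingDist x y : ℕ) : ZMod p) - e))
        = fun y => (((hammingDist x y : ℕ) : ZMod p) - d)
            * ∏ e ∈ E, (((hammingDist x y : ℕ) : ZMod p) - e) := by
      funext y; rw [Finset.prod_cons]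
    rw [h1]
    exact franklMulMem p q n E.card x d ih

lemma franklCount (l : ℕ) :
    ((Finset.univ.filter (fun P : Finset (Fin n) × (Fin n → Fin q) =>
        P.1.card ≤ l ∧ (∀ i ∈ P.1, P.2 i ≠ 0) ∧ (∀ i ∉ P.1, P.2 i = 0))).card)
      = ∑ i ∈ Finset.range (l + 1), n.choose i * (q - 1) ^ i := by
  classical
  set Idx : Finset (Finset (Fin n) × (Fin n → Fin q)) :=
    Finset.univ.filter (fun P => P.1.card ≤ l ∧ (∀ i ∈ P.1, P.2 i ≠ 0) ∧ (∀ i ∉ P.1, P.2 i = 0))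
    with hIdx
  have hmaps : ∀ P ∈ Idx, P.1 ∈ Finset.univ.filter (fun S : Finset (Fin n) => S.card ≤ l) := by
    intro P hP
    simp only [hIdx, Finset.mem_filter, Finset.mem_univ, true_and] at hP ⊢
    exact hP.1
  rw [Finset.card_eq_sum_card_fiberwise hmaps]
  have fiber : ∀ S : Finset (Fin n), S.card ≤ l →
      (Idx.filter (fun P => P.1 = S)).card = (q - 1) ^ S.card := by
    intro S hSl
    have hbij : (Idx.filter (fun P => P.1 = S)).card
        = (S.pi (fun _ => (Finset.univ : Finset (Fin q)).erase 0)).card := by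
      refine Finset.card_bij' (fun P _ => fun i _ => P.2 i)
        (fun b _ => (S, fun i => if h : i ∈ S then b i h else 0)) ?_ ?_ ?_ ?_
      · intro P hP
        simp only [hIdx, Finset.mem_filter, Finset.mem_univ, true_and] at hP
        rw [Finset.mem_pi]
        intro i hi
        rw [Finset.mem_erase]
        exact ⟨hP.1.2.1 i (hP.2 ▸ hi), Finset.mem_univ _⟩
      · intro b hb
        simp only [hIdx, Finset.mem_filter, Finset.mem_univ, true_and]
        refine ⟨⟨hSl, ?_, ?_⟩, trivial⟩
        · intro i hi
          rw [dif_pos hi]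
          exact Finset.ne_of_mem_erase (Finset.mem_pi.mp hb i hi)
        · intro i hi
          rw [dif_neg hi]
      · intro P hP
        simp only [hIdx, Finset.mem_filter, Finset.mem_univ, true_and] at hP
        obtain ⟨⟨_, _, hP0⟩, hPS⟩ := hP
        refine Prod.ext hPS.symm ?_
        funext i
        by_cases hi : i ∈ S
        · simp only [dif_pos hi]
        · have hi' : i ∉ P.1 := by rw [hPS]; exact hi
          simp only [dif_neg hi, hP0 i hi']
      · intro b hb
        funext i hi
        simp only [dif_pos hi]
    rw [hbij, Finset.card_pi]
    have hcard : ((Finset.univ : Finset (Fin q)).erase 0).card = q - 1 := by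
      rw [Finset.card_erase_of_mem (Finset.mem_univ _), Finset.card_univ, Fintype.card_fin]
    rw [Finset.prod_congr rfl (fun i _ => hcard), Finset.prod_const]
  rw [Finset.sum_congr rfl (fun S hS => fiber S (Finset.mem_filter.mp hS).2)]
  rw [← Finset.sum_fiberwise_of_maps_to (g := Finset.card) (t := Finset.range (l + 1))
    (fun S hS => Finset.mem_range.mpr (by
      have := (Finset.mem_filter.mp hS).2; omega))]
  refine Finset.sum_congr rfl fun i hi => ?_
  have hil : i ≤ l := by
    have := Finset.mem_range.mp hi; omega
  have hfe : ((Finset.univ.filter (fun S : Finset (Fin n) => S.card ≤ l)).filter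
      (fun S => S.card = i)) = Finset.univ.filter (fun S : Finset (Fin n) => S.card = i) := by
    ext S
    simp only [Finset.mem_filter, Finset.mem_univ, true_and]
    constructor
    · rintro ⟨_, h⟩; exact h
    · intro h; exact ⟨by omega, h⟩
  rw [hfe]
  have hconst : ∑ S ∈ Finset.univ.filter (fun S : Finset (Fin n) => S.card = i), (q - 1) ^ S.card
      = ∑ _S ∈ Finset.univ.filter (fun S : Finset (Fin n) => S.card = i), (q - 1) ^ i :=
    Finset.sum_congr rfl fun S hS => by rw [(Finset.mem_filter.mp hS).2]
  rw [hconst, Finset.sum_const, smul_eq_mul]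
  congr 1
  have : (Finset.univ.filter (fun S : Finset (Fin n) => S.card = i))
      = Finset.powersetCard i (Finset.univ : Finset (Fin n)) := by
    rw [Finset.powersetCard_eq_filter, Finset.powerset_univ]
  rw [this, Finset.card_powersetCard, Finset.card_univ, Fintype.card_fin]

end FranklAux

/-- Frankl's theorem on mod-p codes. -/
theorem frankl_mod_p_code (p q n l : ℕ) (hp : p.Prime) (hq : 2 ≤ q)
    (D : Finset (ZMod p)) (hD0 : (0 : ZMod p) ∉ D) (hDl : D.card = l)
    (C : Finset (Fin n → Fin q))
    (hC : ∀ x ∈ C, ∀ y ∈ C, x ≠ y → ((hammingDist x y : ZMod p)) ∈ D) :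
    C.card ≤ ∑ i ∈ Finset.range (l + 1), n.choose i * (q - 1) ^ i := by
  classical
  haveI : Fact p.Prime := ⟨hp⟩
  haveI : NeZero q := ⟨by omega⟩
  set Idx : Finset (Finset (Fin n) × (Fin n → Fin q)) :=
    Finset.univ.filter (fun P => P.1.card ≤ l ∧ (∀ i ∈ P.1, P.2 i ≠ 0) ∧ (∀ i ∉ P.1, P.2 i = 0))
    with hIdx
  set T : Finset ((Fin n → Fin q) → ZMod p) := Idx.image (fun P => franklM p q n P.1 P.2) with hT
  have hWT : franklW p q n l ≤ Submodule.span (ZMod p) (T : Set ((Fin n → Fin q) → ZMod p)) := by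
    rw [franklW, Submodule.span_le]
    rintro _ ⟨S, a, hS, ha, rfl⟩
    apply Submodule.subset_span
    refine Finset.mem_coe.mpr (Finset.mem_image.mpr
      ⟨(S, fun i => if i ∈ S then a i else 0), ?_, ?_⟩)
    · simp only [hIdx, Finset.mem_filter, Finset.mem_univ, true_and]
      refine ⟨hS, fun i hi => by simpa [hi] using ha i hi, fun i hi => by simp [hi]⟩
    · funext y
      exact Finset.prod_congr rfl fun i hi => by simp [hi]
  have hcnt : Idx.card = ∑ i ∈ Finset.range (l + 1), n.choose i * (q - 1) ^ i :=
    franklCount q n l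
  set F : ↥C → ((Fin n → Fin q) → ZMod p) := fun x => fun y =>
    ∏ d ∈ D, (((hammingDist (x : Fin n → Fin q) y : ℕ) : ZMod p) - d) with hF
  have hFW : ∀ x : ↥C, F x ∈ Submodule.span (ZMod p) (T : Set ((Fin n → Fin q) → ZMod p)) := by
    intro x
    apply hWT
    have := franklProd p q n (x : Fin n → Fin q) D
    rwa [hDl] at this
  have hind : LinearIndependent (ZMod p) F := by
    rw [Fintype.linearIndependent_iff]
    intro g hg i0
    have h0 := congrFun hg (i0 : Fin n → Fin q)
    rw [Finset.sum_apply] at h0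
    simp only [Pi.smul_apply, smul_eq_mul, Pi.zero_apply] at h0
    have hzero : ∀ i : ↥C, i ≠ i0 → g i * F i (i0 : Fin n → Fin q) = 0 := by
      intro i hi
      have hne : (i : Fin n → Fin q) ≠ (i0 : Fin n → Fin q) :=
        fun h => hi (Subtype.ext h)
      have hd : ((hammingDist (i : Fin n → Fin q) (i0 : Fin n → Fin q) : ℕ) : ZMod p) ∈ D :=
        hC _ i.2 _ i0.2 hne
      have : F i (i0 : Fin n → Fin q) = 0 := Finset.prod_eq_zero hd (sub_self _)
      rw [this, mul_zero]
    rw [Finset.sum_eq_single i0 (fun i _ hi => hzero i hi) (fun h => absurd (Finset.mem_univ i0) h)]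
      at h0
    have hF0 : F i0 (i0 : Fin n → Fin q) ≠ 0 := by
      have hall : ∀ d ∈ D,
          ((hammingDist (i0 : Fin n → Fin q) (i0 : Fin n → Fin q) : ℕ) : ZMod p) - d ≠ 0 := by
        intro d hd
        rw [hammingDist_self]
        push_cast
        rw [zero_sub]
        exact neg_ne_zero.mpr (fun h => hD0 (h ▸ hd))
      exact Finset.prod_ne_zero_iff.mpr hall
    exact (mul_eq_zero.mp h0).resolve_right hF0
  let v : ↥C → Submodule.span (ZMod p) (T : Set ((Fin n → Fin q) → ZMod p)) := fun x => ⟨F x, hFW x⟩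
  have hcomp : (Submodule.span (ZMod p) (T : Set ((Fin n → Fin q) → ZMod p))).subtype ∘ v = F := rfl
  have hv : LinearIndependent (ZMod p) v :=
    LinearIndependent.of_comp (Submodule.span (ZMod p) (T : Set ((Fin n → Fin q) → ZMod p))).subtype (hcomp ▸ hind)
  calc C.card = Fintype.card ↥C := (Fintype.card_coe C).symm
    _ ≤ Module.finrank (ZMod p) (Submodule.span (ZMod p) (T : Set ((Fin n → Fin q) → ZMod p))) :=
        hv.fintype_card_le_finrank
    _ ≤ T.card := finrank_span_finset_le_card T
    _ ≤ Idx.card := Finset.card_image_le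
    _ = ∑ i ∈ Finset.range (l + 1), n.choose i * (q - 1) ^ i := hcnt
end
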